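/- arXiv:2512.10686 — 6 statements merged into one kernel-verified Lean document; each statement's English description precedes it below -/
import Mathlib

section
/- Let S be a nonnegative symmetric purely atomic Borel measure on ℝ^d (there is a countable set D ⊆ ℝ^d with S(ℝ^d ∖ D) = 0) with ∫_{ℝ^d}(1+‖u‖)^{−d−1} dS(u) < ∞. Let B ⊆ ℝ^d be any cone with nonempty interior, i.e. a set with λB ⊆ B for all λ > 0 whose topological interior is nonempty. Then S is perfectly interpolable from B; that is, S induces linear maximal rigidity on Bᶜ. -/
open MeasureTheory Complex
open scoped RealInnerProductSpace Pointwise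

noncomputable section

abbrev Ed (d : ℕ) := EuclideanSpace ℝ (Fin d)

/-- Fourier transform `f̂(u) = ∫ e^{-i⟨u,x⟩} f(x) dx`. -/
def FT {d : ℕ} (f : Ed d → ℂ) (u : Ed d) : ℂ :=
  ∫ x : Ed d, Complex.exp (-Complex.I * (⟪u, x⟫ : ℝ)) * f x

/-- `f` is bounded, measurable, with bounded support contained in `A`. -/
def IsCBS {d : ℕ} (A : Set (Ed d)) (f : Ed d → ℂ) : Prop :=
  Measurable f ∧ (∃ C : ℝ, ∀ x, ‖f x‖ ≤ C) ∧
    Bornology.IsBounded (Function.support f) ∧ Function.support f ⊆ A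

/-- `S` induces linear maximal rigidity on `A`. -/
def LMR {d : ℕ} (S : Measure (Ed d)) (A : Set (Ed d)) : Prop :=
  ∀ f : Ed d → ℂ, IsCBS A f → ∀ ε : ℝ, 0 < ε →
    ∃ h : Ed d → ℂ, IsCBS Aᶜ h ∧ (∫ u, ‖FT f u - FT h u‖ ^ 2 ∂S) < ε

/-! ### Auxiliary lemmas -/

lemma FT_smul_translate {d : ℕ} (f : Ed d → ℂ) (a : ℂ) (v : Ed d) (u : Ed d) :
    FT (fun x => a * f (x - v)) u
      = a * Complex.exp (-Complex.I * (⟪u, v⟫ : ℝ)) * FT f u := by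
  unfold FT
  have key := integral_add_right_eq_self
    (μ := (volume : Measure (Ed d)))
    (fun x : Ed d => Complex.exp (-Complex.I * ((⟪u, x⟫ : ℝ) : ℂ)) * (a * f (x - v))) v
  rw [← key]
  have : ∀ x : Ed d,
      Complex.exp (-Complex.I * ((⟪u, x + v⟫ : ℝ) : ℂ)) * (a * f (x + v - v))
        = (a * Complex.exp (-Complex.I * ((⟪u, v⟫ : ℝ) : ℂ)))
            * (Complex.exp (-Complex.I * ((⟪u, x⟫ : ℝ) : ℂ)) * f x) := by
    intro x
    rw [add_sub_cancel_right, inner_add_right]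
    push_cast
    rw [mul_add, Complex.exp_add]
    ring
  simp_rw [this]
  rw [integral_const_mul]

lemma FT_stronglyMeasurable {d : ℕ} (f : Ed d → ℂ) (hf : Measurable f) :
    StronglyMeasurable (FT f) := by
  have hk : StronglyMeasurable
      (fun p : Ed d × Ed d => Complex.exp (-Complex.I * ((⟪p.1, p.2⟫ : ℝ) : ℂ)) * f p.2) := by
    apply Measurable.stronglyMeasurable
    exact (Complex.measurable_exp.comp
      ((measurable_const.mul
        (Complex.measurable_ofReal.comp (continuous_inner (𝕜 := ℝ)).measurable)))).mul
      (hf.comp measurable_snd)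
  exact hk.integral_prod_right'

lemma norm_exp_neg_I_mul (t : ℝ) : ‖Complex.exp (-Complex.I * (t : ℂ))‖ = 1 := by
  rw [Complex.norm_exp]
  simp

lemma fract_box_close {η : ℝ} (hη : 0 < η) {x y : ℝ}
    (h : ⌊Int.fract x / η⌋₊ = ⌊Int.fract y / η⌋₊) : |Int.fract x - Int.fract y| < η := by
  have hx0 : 0 ≤ Int.fract x / η := div_nonneg (Int.fract_nonneg x) hη.le
  have hy0 : 0 ≤ Int.fract y / η := div_nonneg (Int.fract_nonneg y) hη.le
  have hx1 : Int.fract x / η < ⌊Int.fract x / η⌋₊ + 1 := Nat.lt_floor_add_one _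
  have hy1 : Int.fract y / η < (⌊Int.fract x / η⌋₊ : ℝ) + 1 := by
    rw [h]; exact Nat.lt_floor_add_one _
  have hx2 : (⌊Int.fract x / η⌋₊ : ℝ) ≤ Int.fract x / η := Nat.floor_le hx0
  have hy2 : (⌊Int.fract x / η⌋₊ : ℝ) ≤ Int.fract y / η := by rw [h]; exact Nat.floor_le hy0
  rw [div_lt_iff₀ hη] at hx1 hy1
  rw [le_div_iff₀ hη] at hx2 hy2
  rw [abs_sub_lt_iff]
  constructor <;> nlinarith

/-- Simultaneous recurrence (Kronecker/pigeonhole): for any finitely many reals `θ k`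
there are arbitrarily large `c` with all `c * θ k` within `δ` of `2πℤ`. -/
lemma kron_rec {ι : Type*} [Fintype ι] (θ : ι → ℝ) {δ : ℝ} (hδ : 0 < δ) (T : ℝ) :
    ∃ c : ℝ, T ≤ c ∧ 0 < c ∧ ∀ k, ∃ m : ℤ, |c * θ k - 2 * Real.pi * m| < δ := by
  classical
  set Δ : ℝ := max T 1 with hΔ
  have hΔ1 : (1 : ℝ) ≤ Δ := le_max_right _ _
  have hΔT : T ≤ Δ := le_max_left _ _
  have hΔ0 : (0 : ℝ) < Δ := lt_of_lt_of_le one_pos hΔ1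
  have hπ : (0 : ℝ) < 2 * Real.pi := by positivity
  set η : ℝ := δ / (2 * Real.pi) with hηdef
  have hη : 0 < η := div_pos hδ hπ
  set M : ℕ := ⌊1 / η⌋₊ + 1 with hM
  have hbM : ∀ x : ℝ, ⌊Int.fract x / η⌋₊ < M := by
    intro x
    have h1 : Int.fract x / η ≤ 1 / η := by
      gcongr
      · exact le_of_lt (Int.fract_lt_one x)
    calc ⌊Int.fract x / η⌋₊ ≤ ⌊1 / η⌋₊ := Nat.floor_le_floor h1
      _ < M := Nat.lt_succ_self _
  have main : ∀ i j : ℕ, i < j →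
      (∀ k : ι, ⌊Int.fract ((i : ℝ) * Δ * θ k / (2 * Real.pi)) / η⌋₊
        = ⌊Int.fract ((j : ℝ) * Δ * θ k / (2 * Real.pi)) / η⌋₊) →
      ∃ c : ℝ, T ≤ c ∧ 0 < c ∧ ∀ k, ∃ m : ℤ, |c * θ k - 2 * Real.pi * m| < δ := by
    intro i j hij hbox
    refine ⟨((j : ℝ) - i) * Δ, ?_, ?_, ?_⟩
    · have h1 : (1 : ℝ) ≤ (j : ℝ) - i := by
        have : (i : ℝ) + 1 ≤ j := by exact_mod_cast hij
        linarith
      calc T ≤ Δ := hΔT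
        _ = 1 * Δ := (one_mul Δ).symm
        _ ≤ ((j : ℝ) - i) * Δ := by nlinarith
    · have h1 : (1 : ℝ) ≤ (j : ℝ) - i := by
        have : (i : ℝ) + 1 ≤ j := by exact_mod_cast hij
        linarith
      nlinarith
    · intro k
      set a : ℝ := (j : ℝ) * Δ * θ k / (2 * Real.pi) with ha
      set b : ℝ := (i : ℝ) * Δ * θ k / (2 * Real.pi) with hb
      have hfr : |Int.fract a - Int.fract b| < η := fract_box_close hη (hbox k).symm
      refine ⟨⌊a⌋ - ⌊b⌋, ?_⟩
      have hab : ((j : ℝ) - i) * Δ * θ k = 2 * Real.pi * (a - b) := by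
        rw [ha, hb]; field_simp
      have hfr' : a - b = (⌊a⌋ - ⌊b⌋ : ℤ) + (Int.fract a - Int.fract b) := by
        have h1 : a = ⌊a⌋ + Int.fract a := (Int.floor_add_fract a).symm
        have h2 : b = ⌊b⌋ + Int.fract b := (Int.floor_add_fract b).symm
        push_cast
        nlinarith [h1, h2]
      have heq : ((j : ℝ) - i) * Δ * θ k - 2 * Real.pi * (⌊a⌋ - ⌊b⌋ : ℤ)
          = 2 * Real.pi * (Int.fract a - Int.fract b) := by
        rw [hab, hfr']; push_cast; ring
      rw [heq, abs_mul, abs_of_pos hπ]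
      calc 2 * Real.pi * |Int.fract a - Int.fract b| < 2 * Real.pi * η :=
            (mul_lt_mul_iff_right₀ hπ).mpr hfr
        _ = δ := by rw [hηdef]; field_simp
  obtain ⟨i, hi, j, hj, hij, hφ⟩ :=
    Finset.exists_ne_map_eq_of_card_lt_of_maps_to
      (s := Finset.range (Fintype.card (ι → Fin M) + 1)) (t := (Finset.univ : Finset (ι → Fin M)))
      (by simp) (fun a _ => Finset.mem_univ _)
      (f := fun j k => (⟨⌊Int.fract ((j : ℝ) * Δ * θ k / (2 * Real.pi)) / η⌋₊, hbM _⟩ : Fin M))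
  have hφ' : ∀ k : ι, ⌊Int.fract ((i : ℝ) * Δ * θ k / (2 * Real.pi)) / η⌋₊
      = ⌊Int.fract ((j : ℝ) * Δ * θ k / (2 * Real.pi)) / η⌋₊ := by
    intro k
    have := congrFun hφ k
    simpa using this
  rcases hij.lt_or_gt with h | h
  · exact main i j h hφ'
  · exact main j i h (fun k => (hφ' k).symm)

lemma ennreal_tail {ι : Type*} (w : ι → ENNReal) (hw : ∑' i, w i ≠ ⊤) {δ : ENNReal} (hδ : 0 < δ) :
    ∃ A : Finset ι, ∑' (i : {x // x ∉ A}), w i.1 < δ :=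
  ((tendsto_order.1 (ENNReal.tendsto_tsum_compl_atTop_zero hw)).2 δ hδ).exists

/-- Theorem 5 (quasicrystals): a symmetric purely atomic measure `S` on `ℝ^d` with
`∫ (1+‖u‖)^{-d-1} dS < ∞` is perfectly interpolable from any cone `B` with nonempty
interior, i.e. it induces linear maximal rigidity on `Bᶜ`. -/
theorem atomic_spectrum_interpolable_from_cone {d : ℕ}
    (S : Measure (Ed d))
    (hsymm : Measure.map (fun u : Ed d => -u) S = S)
    (hatomic : ∃ D : Set (Ed d), D.Countable ∧ S Dᶜ = 0)
    (hint : (∫⁻ u, ENNReal.ofReal (((1 + ‖u‖) ^ (d + 1))⁻¹) ∂S) < ⊤)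
    (B : Set (Ed d))
    (hBcone : ∀ c : ℝ, 0 < c → c • B ⊆ B)
    (hBint : (interior B).Nonempty) :
    LMR S Bᶜ := by
  classical
  intro f hf ε hε
  obtain ⟨D, hDc, hDS⟩ := hatomic
  obtain ⟨hfm, ⟨C, hC⟩, hfb, _⟩ := hf
  -- geometry of the cone
  obtain ⟨x₀, hx₀⟩ := hBint
  obtain ⟨r, hr, hball⟩ := Metric.isOpen_iff.mp isOpen_interior x₀ hx₀
  have hballB : Metric.ball x₀ r ⊆ B := hball.trans interior_subset
  obtain ⟨R₀, hR₀⟩ := hfb.subset_closedBall 0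
  set R : ℝ := max R₀ 0 with hRdef
  have hRsupp : Function.support f ⊆ Metric.closedBall 0 R :=
    hR₀.trans (Metric.closedBall_subset_closedBall (le_max_left _ _))
  have hR0 : 0 ≤ R := le_max_right _ _
  set T₀ : ℝ := max 1 (R / r) with hT₀def
  -- support of translates lies in B for large dilation
  have hCBS : ∀ (a : ℂ) (c : ℝ), T₀ < c →
      IsCBS Bᶜᶜ (fun x => a * f (x - c • x₀)) := by
    intro a c hc
    have hc0 : 0 < c := lt_of_lt_of_le one_pos ((le_max_left _ _).trans hc.le)
    have hcr : R < c * r := by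
      have h1 : R / r < c := lt_of_le_of_lt (le_max_right 1 (R / r)) hc
      calc R = R / r * r := by field_simp
        _ < c * r := by nlinarith
    have hsub : Function.support (fun x => a * f (x - c • x₀))
        ⊆ Metric.ball (c • x₀) (c * r) := by
      intro x hx
      have hfx : f (x - c • x₀) ≠ 0 := right_ne_zero_of_mul hx
      have : x - c • x₀ ∈ Metric.closedBall 0 R := hRsupp hfx
      rw [Metric.mem_closedBall, dist_zero_right] at this
      rw [Metric.mem_ball, dist_eq_norm]
      exact lt_of_le_of_lt this hcr
    have hballc : Metric.ball (c • x₀) (c * r) ⊆ B := by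
      have h1 : c • Metric.ball x₀ r = Metric.ball (c • x₀) (‖c‖ * r) :=
        smul_ball hc0.ne' x₀ r
      rw [Real.norm_eq_abs, abs_of_pos hc0] at h1
      rw [← h1]
      exact (Set.smul_set_mono hballB).trans (hBcone c hc0)
    refine ⟨measurable_const.mul (hfm.comp (measurable_id.sub measurable_const)), ?_, ?_, ?_⟩
    · refine ⟨‖a‖ * C, fun x => ?_⟩
      rw [norm_mul]
      exact mul_le_mul_of_nonneg_left (hC _) (norm_nonneg a)
    · exact Metric.isBounded_ball.subset hsub
    · rw [compl_compl]
      exact hsub.trans hballc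
  -- measurability facts
  have hFTf : StronglyMeasurable (FT f) := FT_stronglyMeasurable f hfm
  by_cases hInt : Integrable (fun u => ‖FT f u‖ ^ 2) S
  · -- main case : `‖FT f‖²` is S-integrable
    have hDm : MeasurableSet D := hDc.measurableSet
    have hDcount : Countable D := hDc.to_subtype
    have key : ∀ G : Ed d → ENNReal, ∫⁻ u, G u ∂S = ∑' (l : D), G l.1 * S {l.1} := by
      intro G
      rw [← lintegral_add_compl G hDm, setLIntegral_measure_zero _ _ hDS, add_zero,
        lintegral_countable G hDc]
    set g : Ed d → ENNReal := fun u => (‖FT f u‖₊ : ENNReal) ^ 2 with hgdef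
    have hJfin : ∫⁻ u, g u ∂S ≠ ⊤ := by
      have h2 : (∫⁻ u, (‖(‖FT f u‖ ^ 2 : ℝ)‖₊ : ENNReal) ∂S) < ⊤ := hInt.2
      refine ne_of_lt (lt_of_le_of_lt (le_of_eq (lintegral_congr fun u => ?_)) h2)
      rw [hgdef]
      have : ‖(‖FT f u‖ ^ 2 : ℝ)‖₊ = ‖FT f u‖₊ ^ 2 := by rw [nnnorm_pow, nnnorm_norm]
      rw [this, ENNReal.coe_pow]
    set w : D → ENNReal := fun l => g l.1 * S {l.1} with hwdef
    have hwsum : ∑' l, w l = ∫⁻ u, g u ∂S := (key g).symm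
    have hwfin : ∑' l, w l ≠ ⊤ := by rw [hwsum]; exact hJfin
    have htailpos : (0 : ENNReal) < ENNReal.ofReal (ε / 9) / 4 :=
      ENNReal.div_pos (ne_of_gt (ENNReal.ofReal_pos.mpr (by positivity))) (by norm_num)
    obtain ⟨A, hA⟩ := ennreal_tail w hwfin htailpos
    set Jr : ℝ := (∑' l, w l).toReal with hJrdef
    have hJr0 : 0 ≤ Jr := ENNReal.toReal_nonneg
    set δ₀ : ℝ := min 1 (Real.sqrt (ε / (9 * (Jr + 1)))) with hδ₀def
    have hδ₀pos : 0 < δ₀ := lt_min one_pos (Real.sqrt_pos.mpr (by positivity))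
    have hδ₀le1 : δ₀ ≤ 1 := min_le_left _ _
    have hδ₀sq : δ₀ ^ 2 * Jr ≤ ε / 9 := by
      have h1 : δ₀ ≤ Real.sqrt (ε / (9 * (Jr + 1))) := min_le_right _ _
      have h2 : δ₀ ^ 2 ≤ ε / (9 * (Jr + 1)) := by
        have h3 := Real.sq_sqrt (le_of_lt (show 0 < ε / (9 * (Jr + 1)) by positivity))
        nlinarith
      have h4 : ε / (9 * (Jr + 1)) * Jr ≤ ε / 9 := by
        rw [div_mul_eq_mul_div, div_le_div_iff₀ (by positivity) (by norm_num)]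
        nlinarith
      calc δ₀ ^ 2 * Jr ≤ ε / (9 * (Jr + 1)) * Jr := by nlinarith
        _ ≤ ε / 9 := h4
    -- Kronecker recurrence applied to the atoms in `A`
    obtain ⟨c, hcT, hc0, hck⟩ := kron_rec (ι := {l : D // l ∈ A})
      (θ := fun l => (⟪(l.1.1 : Ed d), x₀⟫ : ℝ)) (δ := δ₀ / 2) (by positivity) (T₀ + 1)
    have hcT₀ : T₀ < c := lt_of_lt_of_le (lt_add_one T₀) hcT
    set v : Ed d := c • x₀ with hvdef
    set h : Ed d → ℂ := fun x => (1 : ℂ) * f (x - v) with hhdef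
    have hFTh : ∀ u, FT h u
        = Complex.exp (-Complex.I * ((⟪u, v⟫ : ℝ) : ℂ)) * FT f u := by
      intro u
      have h1 := FT_smul_translate f 1 v u
      exact h1.trans (by ring)
    have hhm : Measurable h :=
      measurable_const.mul (hfm.comp (measurable_id.sub measurable_const))
    have hFThm : StronglyMeasurable (FT h) := FT_stronglyMeasurable h hhm
    have hdiff : ∀ u, ‖FT f u - FT h u‖
        = ‖FT f u‖ * ‖1 - Complex.exp (-Complex.I * ((⟪u, v⟫ : ℝ) : ℂ))‖ := by
      intro u
      rw [hFTh u, ← norm_mul]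
      congr 1
      ring
    have hsmall : ∀ l : {l : D // l ∈ A},
        ‖1 - Complex.exp (-Complex.I * ((⟪(l.1.1 : Ed d), v⟫ : ℝ) : ℂ))‖ ≤ δ₀ := by
      intro l
      obtain ⟨m, hm⟩ := hck l
      set ρ : ℝ := c * (⟪(l.1.1 : Ed d), x₀⟫ : ℝ) - 2 * Real.pi * m with hρdef
      have hρ : |ρ| < δ₀ / 2 := hm
      have hip : (⟪(l.1.1 : Ed d), v⟫ : ℝ) = c * (⟪(l.1.1 : Ed d), x₀⟫ : ℝ) := by
        rw [hvdef]
        exact real_inner_smul_right _ _ _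
      have hper : Complex.exp (-Complex.I * ((⟪(l.1.1 : Ed d), v⟫ : ℝ) : ℂ))
          = Complex.exp (-Complex.I * (ρ : ℂ)) := by
        have harg : (-Complex.I * ((⟪(l.1.1 : Ed d), v⟫ : ℝ) : ℂ))
            = -Complex.I * (ρ : ℂ) + (-m : ℤ) * (2 * (Real.pi : ℂ) * Complex.I) := by
          rw [hip, hρdef]
          push_cast
          ring
        rw [harg, Complex.exp_add, Complex.exp_int_mul_two_pi_mul_I, mul_one]
      rw [hper, norm_sub_rev]
      have habs : ‖-Complex.I * (ρ : ℂ)‖ = |ρ| := by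
        rw [norm_mul]
        simp
      have hb : ‖-Complex.I * (ρ : ℂ)‖ ≤ 1 := by
        rw [habs]; linarith
      have := Complex.norm_exp_sub_one_le hb
      rw [habs] at this
      calc ‖Complex.exp (-Complex.I * (ρ : ℂ)) - 1‖
          = ‖Complex.exp (-Complex.I * (ρ : ℂ)) - 1‖ := rfl
        _ ≤ 2 * |ρ| := this
        _ ≤ δ₀ := by linarith
    set GG : Ed d → ENNReal := fun u => (‖FT f u - FT h u‖₊ : ENNReal) ^ 2 with hGGdef
    have hGg : ∀ u, GG u = ENNReal.ofReal ‖FT f u - FT h u‖ ^ 2 := by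
      intro u
      rw [hGGdef, ofReal_norm, enorm_eq_nnnorm]
    have hgOf : ∀ u, g u = ENNReal.ofReal ‖FT f u‖ ^ 2 := by
      intro u
      rw [hgdef, ofReal_norm, enorm_eq_nnnorm]
    have hGu4 : ∀ u, GG u ≤ 4 * g u := by
      intro u
      have hn : ‖FT f u - FT h u‖ ≤ 2 * ‖FT f u‖ := by
        rw [hdiff u]
        have h1 : ‖1 - Complex.exp (-Complex.I * ((⟪u, v⟫ : ℝ) : ℂ))‖ ≤ 2 := by
          calc ‖1 - Complex.exp (-Complex.I * ((⟪u, v⟫ : ℝ) : ℂ))‖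
              ≤ ‖(1 : ℂ)‖ + ‖Complex.exp (-Complex.I * ((⟪u, v⟫ : ℝ) : ℂ))‖ := norm_sub_le _ _
            _ = 2 := by rw [norm_exp_neg_I_mul, norm_one]; norm_num
        nlinarith [norm_nonneg (FT f u)]
      calc GG u = ENNReal.ofReal ‖FT f u - FT h u‖ ^ 2 := hGg u
        _ ≤ ENNReal.ofReal (2 * ‖FT f u‖) ^ 2 := by
            gcongr

        _ = 4 * g u := by
            rw [ENNReal.ofReal_mul (by norm_num), mul_pow, hgOf u]
            norm_num
    have hGA : ∀ l : {l : D // l ∈ A}, GG l.1.1 ≤ ENNReal.ofReal (δ₀ ^ 2) * g l.1.1 := by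
      intro l
      have hn : ‖FT f l.1.1 - FT h l.1.1‖ ≤ δ₀ * ‖FT f l.1.1‖ := by
        rw [hdiff l.1.1]
        have := hsmall l
        nlinarith [norm_nonneg (FT f l.1.1), norm_nonneg
          (1 - Complex.exp (-Complex.I * ((⟪(l.1.1 : Ed d), v⟫ : ℝ) : ℂ)))]
      calc GG l.1.1 = ENNReal.ofReal ‖FT f l.1.1 - FT h l.1.1‖ ^ 2 := hGg _
        _ ≤ ENNReal.ofReal (δ₀ * ‖FT f l.1.1‖) ^ 2 := by
            gcongr

        _ = ENNReal.ofReal (δ₀ ^ 2) * g l.1.1 := by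
            rw [ENNReal.ofReal_mul hδ₀pos.le, mul_pow, hgOf, ENNReal.ofReal_pow hδ₀pos.le]
    -- the crucial lintegral estimate
    have hcalc : ∫⁻ u, GG u ∂S < ENNReal.ofReal ε := by
      rw [key GG]
      set F : D → ENNReal := fun l => GG l.1 * S {l.1} with hFdef
      have hsplit : (∑ l ∈ A, F l) + ∑' (l : {x : D // x ∉ A}), F l.1 = ∑' l, F l := by
        have h1 := Summable.tsum_add_tsum_compl (f := F) (s := (↑A : Set D))
          ENNReal.summable ENNReal.summable
        rw [← h1, Finset.tsum_subtype']
        congr 1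
      rw [← hsplit]
      have hpartA : (∑ l ∈ A, F l) ≤ ENNReal.ofReal (ε / 9) := by
        have h1 : ∀ l ∈ A, F l ≤ ENNReal.ofReal (δ₀ ^ 2) * w l := by
          intro l hl
          rw [hFdef, hwdef]
          calc GG l.1 * S {l.1} ≤ (ENNReal.ofReal (δ₀ ^ 2) * g l.1) * S {l.1} :=
                mul_le_mul_left (hGA ⟨l, hl⟩) _
            _ = ENNReal.ofReal (δ₀ ^ 2) * (g l.1 * S {l.1}) := by ring
        calc (∑ l ∈ A, F l) ≤ ∑ l ∈ A, ENNReal.ofReal (δ₀ ^ 2) * w l :=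
              Finset.sum_le_sum h1
          _ = ENNReal.ofReal (δ₀ ^ 2) * ∑ l ∈ A, w l := by rw [Finset.mul_sum]
          _ ≤ ENNReal.ofReal (δ₀ ^ 2) * ∑' l, w l :=
              mul_le_mul_right (ENNReal.sum_le_tsum A) _
          _ = ENNReal.ofReal (δ₀ ^ 2) * ENNReal.ofReal Jr := by
              rw [hJrdef, ENNReal.ofReal_toReal hwfin]
          _ = ENNReal.ofReal (δ₀ ^ 2 * Jr) := by
              rw [ENNReal.ofReal_mul (by positivity)]
          _ ≤ ENNReal.ofReal (ε / 9) := ENNReal.ofReal_le_ofReal hδ₀sq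
      have hpartB : (∑' (l : {x : D // x ∉ A}), F l.1) ≤ ENNReal.ofReal (ε / 9) := by
        have h1 : ∀ l : {x : D // x ∉ A}, F l.1 ≤ 4 * w l.1 := by
          intro l
          rw [hFdef, hwdef]
          calc GG l.1.1 * S {l.1.1} ≤ (4 * g l.1.1) * S {l.1.1} :=
                mul_le_mul_left (hGu4 l.1.1) _
            _ = 4 * (g l.1.1 * S {l.1.1}) := by ring
        calc (∑' (l : {x : D // x ∉ A}), F l.1)
            ≤ ∑' (l : {x : D // x ∉ A}), 4 * w l.1 := ENNReal.tsum_le_tsum h1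
          _ = 4 * ∑' (l : {x : D // x ∉ A}), w l.1 := ENNReal.tsum_mul_left
          _ ≤ 4 * (ENNReal.ofReal (ε / 9) / 4) := mul_le_mul_right hA.le _
          _ ≤ ENNReal.ofReal (ε / 9) := ENNReal.mul_div_le
      calc (∑ l ∈ A, F l) + ∑' (l : {x : D // x ∉ A}), F l.1
          ≤ ENNReal.ofReal (ε / 9) + ENNReal.ofReal (ε / 9) := add_le_add hpartA hpartB
        _ = ENNReal.ofReal (ε / 9 + ε / 9) := by
            rw [ENNReal.ofReal_add (by positivity) (by positivity)]
        _ < ENNReal.ofReal ε := by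
            rw [ENNReal.ofReal_lt_ofReal_iff hε]
            linarith
    have hmeas : AEStronglyMeasurable (fun u => ‖FT f u - FT h u‖ ^ 2) S := by
      have hsm : StronglyMeasurable fun u => ‖FT f u - FT h u‖ ^ 2 := by
        simp_rw [pow_two]
        exact (hFTf.sub hFThm).norm.mul (hFTf.sub hFThm).norm
      exact hsm.aestronglyMeasurable
    have heq : ∫ u, ‖FT f u - FT h u‖ ^ 2 ∂S = (∫⁻ u, GG u ∂S).toReal := by
      rw [integral_eq_lintegral_of_nonneg_ae (ae_of_all _ fun u => by positivity) hmeas]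
      congr 1
      apply lintegral_congr
      intro u
      rw [ENNReal.ofReal_pow (norm_nonneg _), hGg u]
    refine ⟨h, hCBS 1 c hcT₀, ?_⟩
    rw [heq]
    exact ENNReal.toReal_lt_of_lt_ofReal hcalc
  · -- degenerate case : non-integrable, use `h = (1/2) f(· - v)`
    set c : ℝ := T₀ + 1 with hcdef
    have hcT : T₀ < c := lt_add_one _
    set v : Ed d := c • x₀ with hvdef
    set h : Ed d → ℂ := fun x => (1 / 2 : ℂ) * f (x - v) with hhdef
    have hFTh : ∀ u, FT h u
        = (1 / 2 : ℂ) * Complex.exp (-Complex.I * ((⟪u, v⟫ : ℝ) : ℂ)) * FT f u :=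
      fun u => FT_smul_translate f (1 / 2) v u
    have hhm : Measurable h :=
      measurable_const.mul (hfm.comp (measurable_id.sub measurable_const))
    have hFThm : StronglyMeasurable (FT h) := FT_stronglyMeasurable h hhm
    have hlow : ∀ u, ‖FT f u‖ ≤ 2 * ‖FT f u - FT h u‖ := by
      intro u
      have hnh : ‖FT h u‖ = 1 / 2 * ‖FT f u‖ := by
        rw [hFTh u, norm_mul, norm_mul, norm_exp_neg_I_mul]
        norm_num
      have h1 : ‖FT f u‖ - ‖FT h u‖ ≤ ‖FT f u - FT h u‖ := norm_sub_norm_le _ _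
      linarith
    have hni : ¬ Integrable (fun u => ‖FT f u - FT h u‖ ^ 2) S := by
      intro hI
      apply hInt
      have h4 : Integrable (fun u => 4 * ‖FT f u - FT h u‖ ^ 2) S := hI.const_mul 4
      refine h4.mono ?_ (ae_of_all _ fun u => ?_)
      · have hsm : StronglyMeasurable (fun u => ‖FT f u‖ ^ 2) := by
          simp_rw [pow_two]
          exact hFTf.norm.mul hFTf.norm
        exact hsm.aestronglyMeasurable
      · have h1 := hlow u
        have h2 : (0 : ℝ) ≤ ‖FT f u‖ := norm_nonneg _
        have h3 : (0 : ℝ) ≤ ‖FT f u - FT h u‖ := norm_nonneg _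
        rw [Real.norm_eq_abs, Real.norm_eq_abs, _root_.abs_of_nonneg (by positivity),
          _root_.abs_of_nonneg (by positivity)]
        nlinarith
    exact ⟨h, hCBS (1 / 2) c hcT, by rw [integral_undef hni]; exact hε⟩
end
end

section
/- Let S' be a finite nonnegative purely atomic Borel measure on the unit torus 𝕋^d = {u ∈ ℂ^d : |u_i| = 1 for all i} (there is a countable set D ⊆ 𝕋^d with S'(𝕋^d ∖ D) = 0). Let φ ∈ L²(S') satisfy ∫_{𝕋^d} φ(u)·u^m dS'(u) = 0 for every m ∈ ℕ^d with all coordinates nonnegative, where u^m = ∏_{i=1}^d u_i^{m_i}. Then φ = 0 S'-almost everywhere. -/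
open MeasureTheory Complex Filter Topology

noncomputable section

instance : MeasurableSpace Circle := borel Circle
instance : BorelSpace Circle := ⟨rfl⟩

lemma circle_norm_coe (z : Circle) : ‖(z : ℂ)‖ = 1 := by
  exact Circle.norm_coe z

lemma circle_conj_mul (z : Circle) : (starRingEnd ℂ) (z : ℂ) * (z : ℂ) = 1 := by
  rw [mul_comm, Complex.mul_conj, Circle.normSq_coe, Complex.ofReal_one]

/-- Lemma 2: for a finite purely atomic measure `S'` on the unit torus `𝕋^d`, any
`φ ∈ L²(S')` orthogonal to all monomials `u^m` with nonnegative exponents vanishes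
`S'`-almost everywhere (density of analytic polynomials). -/
theorem atomic_torus_no_orthogonal {d : ℕ}
    (S' : Measure (Fin d → Circle)) [IsFiniteMeasure S']
    (hatomic : ∃ D : Set (Fin d → Circle), D.Countable ∧ S' Dᶜ = 0)
    (φ : (Fin d → Circle) → ℂ) (hφ : MemLp φ 2 S')
    (horth : ∀ m : Fin d → ℕ,
      (∫ u, φ u * ∏ i, ((u i : ℂ) ^ (m i)) ∂S') = 0) :
    φ =ᵐ[S'] 0 := by
  classical
  have hφint : Integrable φ S' := hφ.integrable one_le_two
  -- integrability of φ times a monomial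
  have hmono : ∀ m : Fin d → ℕ,
      Integrable (fun u : Fin d → Circle => φ u * ∏ i, ((u i : ℂ) ^ (m i))) S' := by
    intro m
    have hc : Continuous fun u : Fin d → Circle => ∏ i, ((u i : ℂ) ^ (m i)) := by
      apply continuous_finset_prod
      intro i _
      exact (continuous_subtype_val.comp (continuous_apply i)).pow _
    have hb : ∀ u : Fin d → Circle, ‖∏ i, ((u i : ℂ) ^ (m i))‖ ≤ 1 := by
      intro u
      rw [norm_prod]
      apply Finset.prod_le_one
      · intro i _; positivity
      · intro i _; simp [norm_pow, circle_norm_coe]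
    have := hφint.bdd_mul hc.aestronglyMeasurable (Filter.Eventually.of_forall hb)
    exact this.congr (Filter.Eventually.of_forall fun u => mul_comm _ _)
  -- key step: at every point, φ a * S'({a}) = 0
  have key : ∀ a : Fin d → Circle, φ a * (S' {a}).toReal = 0 := by
    intro a
    set f : ℕ → (Fin d → Circle) → ℂ := fun N u =>
      ∏ i, ∑ k ∈ Finset.range N,
        (N : ℂ)⁻¹ * ((starRingEnd ℂ) (a i : ℂ)) ^ k * (u i : ℂ) ^ k with hf
    -- each ∫ φ * f N = 0
    have hint0 : ∀ N, (∫ u, φ u * f N u ∂S') = 0 := by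
      intro N
      have expand : ∀ u : Fin d → Circle, φ u * f N u =
          ∑ m ∈ Fintype.piFinset (fun _ : Fin d => Finset.range N),
            (∏ i, (N : ℂ)⁻¹ * ((starRingEnd ℂ) (a i : ℂ)) ^ (m i)) *
              (φ u * ∏ i, ((u i : ℂ) ^ (m i))) := by
        intro u
        rw [hf]
        simp only
        rw [Finset.prod_univ_sum, Finset.mul_sum]
        refine Finset.sum_congr rfl fun m _ => ?_
        rw [Finset.prod_mul_distrib]
        ring
      calc (∫ u, φ u * f N u ∂S')
          = ∫ u, ∑ m ∈ Fintype.piFinset (fun _ : Fin d => Finset.range N),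
              (∏ i, (N : ℂ)⁻¹ * ((starRingEnd ℂ) (a i : ℂ)) ^ (m i)) *
                (φ u * ∏ i, ((u i : ℂ) ^ (m i))) ∂S' := by
            exact integral_congr_ae (Filter.Eventually.of_forall expand)
        _ = ∑ m ∈ Fintype.piFinset (fun _ : Fin d => Finset.range N),
              ∫ u, (∏ i, (N : ℂ)⁻¹ * ((starRingEnd ℂ) (a i : ℂ)) ^ (m i)) *
                (φ u * ∏ i, ((u i : ℂ) ^ (m i))) ∂S' := by
            exact integral_finset_sum _ fun m _ => (hmono m).const_mul _
        _ = 0 := by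
            refine Finset.sum_eq_zero fun m _ => ?_
            rw [integral_const_mul, horth m, mul_zero]
    -- norm bound on f N
    have hbnd : ∀ N u, ‖f N u‖ ≤ 1 := by
      intro N u
      rw [hf]
      simp only
      rw [norm_prod]
      apply Finset.prod_le_one
      · intro i _; positivity
      · intro i _
        calc ‖∑ k ∈ Finset.range N,
              (N : ℂ)⁻¹ * ((starRingEnd ℂ) (a i : ℂ)) ^ k * (u i : ℂ) ^ k‖
            ≤ ∑ k ∈ Finset.range N,
              ‖(N : ℂ)⁻¹ * ((starRingEnd ℂ) (a i : ℂ)) ^ k * (u i : ℂ) ^ k‖ :=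
              norm_sum_le _ _
          _ = ∑ k ∈ Finset.range N, ((N : ℝ))⁻¹ := by
              refine Finset.sum_congr rfl fun k _ => ?_
              simp [norm_mul, norm_pow, circle_norm_coe, RCLike.norm_conj]
          _ ≤ 1 := by
              rcases Nat.eq_zero_or_pos N with h | h
              · simp [h]
              · rw [Finset.sum_const, Finset.card_range, nsmul_eq_mul,
                  mul_inv_cancel₀ (by exact_mod_cast h.ne' : (N : ℝ) ≠ 0)]
    -- pointwise limit of f N u
    have hlim : ∀ u : Fin d → Circle,
        Tendsto (fun N => f N u) atTop (𝓝 (Set.indicator {a} 1 u)) := by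
      intro u
      have hfac : ∀ i : Fin d,
          Tendsto (fun N => ∑ k ∈ Finset.range N,
              (N : ℂ)⁻¹ * ((starRingEnd ℂ) (a i : ℂ)) ^ k * (u i : ℂ) ^ k)
            atTop (𝓝 (if u i = a i then 1 else 0)) := by
        intro i
        set z : ℂ := (starRingEnd ℂ) (a i : ℂ) * (u i : ℂ) with hz
        have hsum : ∀ N, ∑ k ∈ Finset.range N,
            (N : ℂ)⁻¹ * ((starRingEnd ℂ) (a i : ℂ)) ^ k * (u i : ℂ) ^ k
            = (N : ℂ)⁻¹ * ∑ k ∈ Finset.range N, z ^ k := by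
          intro N
          rw [Finset.mul_sum]
          refine Finset.sum_congr rfl fun k _ => ?_
          rw [hz, mul_pow]; ring
        by_cases he : u i = a i
        · rw [if_pos he]
          have hz1 : z = 1 := by rw [hz, he, circle_conj_mul]
          have : ∀ N : ℕ, 1 ≤ N → (∑ k ∈ Finset.range N,
              (N : ℂ)⁻¹ * ((starRingEnd ℂ) (a i : ℂ)) ^ k * (u i : ℂ) ^ k) = 1 := by
            intro N hN
            rw [hsum N, hz1]
            simp only [one_pow, Finset.sum_const, Finset.card_range, nsmul_eq_mul, mul_one]
            rw [inv_mul_cancel₀]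
            exact_mod_cast Nat.one_le_iff_ne_zero.mp hN
          refine Tendsto.congr' ?_ tendsto_const_nhds
          filter_upwards [eventually_ge_atTop 1] with N hN
          exact (this N hN).symm
        · rw [if_neg he]
          have hz1 : z ≠ 1 := by
            intro hcon
            apply he
            have : (u i : ℂ) = (a i : ℂ) := by
              have h2 := congrArg (fun w => (a i : ℂ) * w) hcon
              simp only [mul_one] at h2
              rw [hz, ← mul_assoc, mul_comm ((a i : ℂ)) _, circle_conj_mul, one_mul] at h2
              exact h2
            exact Subtype.ext this
          have hznorm : ‖z‖ = 1 := by
            rw [hz, norm_mul, RCLike.norm_conj, circle_norm_coe, circle_norm_coe, mul_one]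
          apply squeeze_zero_norm (a := fun N : ℕ => (N : ℝ)⁻¹ * (2 / ‖z - 1‖))
          · intro N
            rw [hsum N, geom_sum_eq hz1, norm_mul]
            gcongr
            · simp
            · rw [norm_div]
              gcongr
              calc ‖z ^ N - 1‖ ≤ ‖z ^ N‖ + ‖(1 : ℂ)‖ := norm_sub_le _ _
                _ = 2 := by rw [norm_pow, hznorm, one_pow, norm_one]; norm_num
          · have := tendsto_inv_atTop_nhds_zero_nat.mul_const (2 / ‖z - 1‖)
            simpa using this
      have hprod := tendsto_finset_prod (f := fun i (N : ℕ) =>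
          ∑ k ∈ Finset.range N, (N : ℂ)⁻¹ * ((starRingEnd ℂ) (a i : ℂ)) ^ k * (u i : ℂ) ^ k)
        (a := fun i => if u i = a i then (1 : ℂ) else 0) Finset.univ (fun i _ => hfac i)
      have hval : (∏ i, if u i = a i then (1 : ℂ) else 0) = Set.indicator {a} 1 u := by
        by_cases hu : u = a
        · have : ∀ i, u i = a i := fun i => congrFun hu i
          simp [hu, this, Set.indicator]
        · obtain ⟨i, hi⟩ := Function.ne_iff.mp hu
          rw [Finset.prod_eq_zero (f := fun i => if u i = a i then (1 : ℂ) else 0)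
            (Finset.mem_univ i) (if_neg hi)]
          rw [Set.indicator_of_notMem (by simpa using hu)]
      rw [hf]
      simpa [hval] using hprod
    -- dominated convergence
    have hmeas : ∀ N, AEStronglyMeasurable (fun u => φ u * f N u) S' := by
      intro N
      apply hφ.aestronglyMeasurable.mul
      have : Continuous (f N) := by
        rw [hf]
        apply continuous_finset_prod
        intro i _
        apply continuous_finset_sum
        intro k _
        exact continuous_const.mul
          (((continuous_subtype_val.comp (continuous_apply i)).pow _))
      exact this.aestronglyMeasurable
    have hDCT : Tendsto (fun N => ∫ u, φ u * f N u ∂S') atTop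
        (𝓝 (∫ u, φ u * Set.indicator {a} 1 u ∂S')) := by
      apply tendsto_integral_of_dominated_convergence (fun u => ‖φ u‖) hmeas hφint.norm
      · intro N
        filter_upwards with u
        rw [norm_mul]
        calc ‖φ u‖ * ‖f N u‖ ≤ ‖φ u‖ * 1 := by gcongr; exact hbnd N u
          _ = ‖φ u‖ := mul_one _
      · filter_upwards with u
        exact (hlim u).const_mul (φ u)
    have hzero : (∫ u, φ u * Set.indicator {a} 1 u ∂S') = 0 := by
      have h2 : Tendsto (fun N => ∫ u, φ u * f N u ∂S') atTop (𝓝 0) :=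
        (tendsto_congr fun N => hint0 N).mpr tendsto_const_nhds
      exact tendsto_nhds_unique hDCT h2
    -- compute the integral against the indicator
    have heq : (fun u => φ u * Set.indicator {a} 1 u)
        = Set.indicator {a} (fun _ => φ a) := by
      funext u
      by_cases hu : u = a
      · simp [hu, Set.indicator]
      · simp [Set.indicator_of_notMem, hu]
    rw [heq] at hzero
    rw [integral_indicator (measurableSet_singleton a), setIntegral_const] at hzero
    rw [mul_comm]
    simpa [smul_eq_mul, measureReal_def] using hzero
  -- conclude
  obtain ⟨D, hDc, hD0⟩ := hatomic
  rw [Filter.EventuallyEq, ae_iff]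
  have hsub : {u | ¬ φ u = (0 : (Fin d → Circle) → ℂ) u} ⊆
      Dᶜ ∪ ⋃ a ∈ {a ∈ D | φ a ≠ 0}, {a} := by
    intro u hu
    simp only [Pi.zero_apply, Set.mem_setOf_eq] at hu
    by_cases hD : u ∈ D
    · right
      simp only [Set.mem_iUnion, Set.mem_singleton_iff]
      exact ⟨u, ⟨hD, hu⟩, rfl⟩
    · exact Or.inl hD
  apply measure_mono_null hsub
  apply measure_union_null hD0
  rw [measure_biUnion_null_iff (hDc.mono (Set.sep_subset _ _))]
  intro a ha
  have hka := key a
  rcases mul_eq_zero.mp hka with h | h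
  · exact absurd h ha.2
  · have h' : (S' {a}).toReal = 0 := by exact_mod_cast h
    exact ((ENNReal.toReal_eq_zero_iff _).mp h').resolve_right (measure_ne_top S' _)
end
end

section
/- Let d ≥ 1 and let I_1, …, I_d be nonempty open subsets of the unit circle 𝕋 = {z ∈ ℂ : |z| = 1}. Then for every ε > 0 there exist a finite set F ⊆ {m ∈ ℤ^d : m_i ≥ 1 for all i} and coefficients (h_m)_{m∈F} in ℂ such that sup_{z ∈ (𝕋∖I_1)×⋯×(𝕋∖I_d)} |1 − Σ_{m∈F} h_m z^m| ≤ ε, where z^m = ∏_{i=1}^d z_i^{m_i}. -/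
open MeasureTheory Complex

noncomputable section

open Finset Filter

private theorem binom_split' (M : ℕ) (ζ : ℂ) :
    ∑ j ∈ Finset.range (2*M+1), ζ ^ j * ((2*M).choose j : ℂ) =
      ζ ^ M * ((2*M).choose M : ℂ)
      + ∑ i ∈ Finset.range M,
          ((2*M).choose (M+1+i) : ℂ) * (ζ ^ (M+1+i) + ζ ^ (M-1-i)) := by
  have h1 : ∑ j ∈ Finset.range (2*M+1), ζ ^ j * ((2*M).choose j : ℂ)
      = ∑ j ∈ Finset.range M, ζ ^ j * ((2*M).choose j : ℂ)
        + ∑ j ∈ Finset.Ico M (2*M+1), ζ ^ j * ((2*M).choose j : ℂ) := by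
    rw [Finset.range_eq_Ico, ← Finset.sum_Ico_consecutive _ (Nat.zero_le M) (by omega : M ≤ 2*M+1), Finset.range_eq_Ico]
  have h2 : ∑ j ∈ Finset.Ico M (2*M+1), ζ ^ j * ((2*M).choose j : ℂ)
      = ζ ^ M * ((2*M).choose M : ℂ)
        + ∑ j ∈ Finset.Ico (M+1) (2*M+1), ζ ^ j * ((2*M).choose j : ℂ) := by
    rw [Finset.sum_eq_sum_Ico_succ_bot (show M < 2*M+1 by omega)]
  have h3 : ∑ j ∈ Finset.Ico (M+1) (2*M+1), ζ ^ j * ((2*M).choose j : ℂ)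
      = ∑ i ∈ Finset.range M, ζ ^ (M+1+i) * ((2*M).choose (M+1+i) : ℂ) := by
    rw [Finset.sum_Ico_eq_sum_range]
    have : 2*M+1 - (M+1) = M := by omega
    rw [this]
  have h4 : ∑ j ∈ Finset.range M, ζ ^ j * ((2*M).choose j : ℂ)
      = ∑ i ∈ Finset.range M, ζ ^ (M-1-i) * ((2*M).choose (M+1+i) : ℂ) := by
    rw [← Finset.sum_range_reflect]
    refine Finset.sum_congr rfl fun i hi => ?_
    simp only [Finset.mem_range] at hi
    have : (2*M).choose (M-1-i) = (2*M).choose (M+1+i) := by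
      rw [← Nat.choose_symm (show M+1+i ≤ 2*M by omega)]
      congr 1
      omega
    rw [this]
  rw [h1, h2, h3, h4, add_left_comm, ← Finset.sum_add_distrib]
  congr 1
  refine Finset.sum_congr rfl fun i hi => ?_
  ring

private theorem fejer_re' (M : ℕ) (ζ : ℂ) (hζ : ‖ζ‖ = 1) :
    (∑ i ∈ Finset.range M, ((2*M).choose (M+1+i) : ℂ) * ζ ^ (i+1)).re
      = ((2 + 2*ζ.re)^M - ((2*M).choose M : ℝ)) / 2 := by
  have hne : ζ ≠ 0 := by
    intro h; rw [h] at hζ; simp at hζ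
  have hmc : ζ * (starRingEnd ℂ) ζ = 1 := by
    rw [Complex.mul_conj]
    norm_cast
    rw [Complex.normSq_eq_norm_sq, hζ]; norm_num
  set S := ∑ i ∈ Finset.range M, ((2*M).choose (M+1+i) : ℂ) * ζ ^ (i+1) with hS
  have hinv : (starRingEnd ℂ) ζ = ζ⁻¹ := eq_inv_of_mul_eq_one_right hmc
  have hconj : (starRingEnd ℂ) S = ∑ i ∈ Finset.range M, ((2*M).choose (M+1+i) : ℂ) * (ζ⁻¹) ^ (i+1) := by
    rw [hS, map_sum]
    refine Finset.sum_congr rfl fun i _ => ?_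
    rw [map_mul, map_pow, hinv, map_natCast]
  have h2re : ((2 + 2*ζ.re : ℝ) : ℂ) = 2 + ζ + (starRingEnd ℂ) ζ := by
    have h := Complex.add_conj ζ
    push_cast at h ⊢
    linear_combination - h
  have hsq : (1+ζ)^2 = ζ * ((2 + 2*ζ.re : ℝ) : ℂ) := by
    rw [h2re]; linear_combination - hmc
  have hpow : (1+ζ)^(2*M) = ζ^M * ((2 + 2*ζ.re : ℝ) : ℂ)^M := by
    rw [pow_mul, hsq, mul_pow]
  have expand : (1+ζ)^(2*M) = ∑ j ∈ Finset.range (2*M+1), ζ^j * ((2*M).choose j : ℂ) := by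
    rw [add_comm 1 ζ, add_pow]
    simp
  have hmulS : ζ^M * S = ∑ i ∈ Finset.range M, ((2*M).choose (M+1+i) : ℂ) * ζ^(M+1+i) := by
    rw [hS, Finset.mul_sum]
    refine Finset.sum_congr rfl fun i _ => ?_
    rw [show M+1+i = M+(i+1) by omega, pow_add]
    ring
  have hmulC : ζ^M * (starRingEnd ℂ) S = ∑ i ∈ Finset.range M, ((2*M).choose (M+1+i) : ℂ) * ζ^(M-1-i) := by
    rw [hconj, Finset.mul_sum]
    refine Finset.sum_congr rfl fun i hi => ?_
    simp only [Finset.mem_range] at hi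
    have hz : ζ^M * (ζ⁻¹)^(i+1) = ζ^(M-1-i) := by
      rw [inv_pow, mul_inv_eq_iff_eq_mul₀ (pow_ne_zero _ hne), ← pow_add]
      congr 1; omega
    calc ζ^M * (((2*M).choose (M+1+i) : ℂ) * (ζ⁻¹)^(i+1))
        = ((2*M).choose (M+1+i) : ℂ) * (ζ^M * (ζ⁻¹)^(i+1)) := by ring
      _ = _ := by rw [hz]
  have hleft : (1+ζ)^(2*M) = ζ^M * (((2*M).choose M : ℂ) + (S + (starRingEnd ℂ) S)) := by
    rw [expand, binom_split']
    rw [mul_add, mul_add, hmulS, hmulC, ← Finset.sum_add_distrib]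
    congr 1
    refine Finset.sum_congr rfl fun i _ => ?_
    ring
  have hcancel : ((2*M).choose M : ℂ) + (S + (starRingEnd ℂ) S) = ((2 + 2*ζ.re : ℝ) : ℂ)^M :=
    mul_left_cancel₀ (pow_ne_zero M hne) (hleft.symm.trans hpow)
  rw [Complex.add_conj S] at hcancel
  have : ((2*M).choose M : ℝ) + 2*S.re = (2 + 2*ζ.re)^M := by
    exact_mod_cast hcancel
  linarith

private theorem exp_tail' (R : ℝ) (hR : 0 ≤ R) (m : ℕ) (x : ℂ) (hx : ‖x‖ ≤ R) :
    ‖Complex.exp x - ∑ j ∈ Finset.range m, x^j / (j.factorial : ℂ)‖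
      ≤ ∑' j : ℕ, R^(j+m) / ((j+m).factorial : ℝ) := by
  have hsummable : Summable (fun j : ℕ => x^j / (j.factorial : ℂ)) :=
    NormedSpace.expSeries_div_summable x
  have hsum : Complex.exp x = ∑' j : ℕ, x^j / (j.factorial : ℂ) := by
    rw [Complex.exp_eq_exp_ℂ, NormedSpace.exp_eq_tsum_div]
  have hsplit := Summable.sum_add_tsum_nat_add (f := fun j : ℕ => x^j / (j.factorial : ℂ)) m hsummable
  have hdiff : Complex.exp x - ∑ j ∈ Finset.range m, x^j / (j.factorial : ℂ)
      = ∑' j : ℕ, x^(j+m) / ((j+m).factorial : ℂ) := by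
    rw [hsum, ← hsplit]
    ring
  rw [hdiff]
  have hRsum : Summable (fun j : ℕ => R^(j+m) / ((j+m).factorial : ℝ)) := by
    exact (summable_nat_add_iff m).2 (Real.summable_pow_div_factorial R)
  have hterm : ∀ j : ℕ, ‖x^(j+m) / (((j+m).factorial : ℕ) : ℂ)‖ ≤ R^(j+m) / ((j+m).factorial : ℝ) := by
    intro j
    rw [norm_div, norm_pow, RCLike.norm_natCast]
    have hfp : (0:ℝ) < ((j+m).factorial : ℝ) := by
      exact_mod_cast (j+m).factorial_pos
    gcongr
  have hnormsum : Summable (fun j : ℕ => ‖x^(j+m) / (((j+m).factorial : ℕ) : ℂ)‖) :=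
    Summable.of_nonneg_of_le (fun j => norm_nonneg _) hterm hRsum
  refine (norm_tsum_le_tsum_norm hnormsum).trans ?_
  exact Summable.tsum_le_tsum hterm hnormsum hRsum

private theorem prod_close' {ι : Type*} (s : Finset ι) (a : ι → ℂ) (δ : ℝ)
    (hδ0 : 0 ≤ δ) (hδ1 : δ ≤ 1)
    (h : ∀ i ∈ s, ‖1 - a i‖ ≤ δ) : ‖1 - ∏ i ∈ s, a i‖ ≤ (2^s.card - 1) * δ := by
  induction s using Finset.cons_induction with
  | empty => simp
  | cons i s hi ih =>
    have hP := ih (fun j hj => h j (Finset.mem_cons_of_mem hj))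
    have hai := h i (Finset.mem_cons_self i s)
    have h2c : (1:ℝ) ≤ 2^s.card := one_le_pow₀ (by norm_num)
    have hPn : ‖∏ j ∈ s, a j‖ ≤ 2^s.card := by
      have h1 : ‖∏ j ∈ s, a j‖ ≤ ‖(1:ℂ)‖ + ‖(1:ℂ) - ∏ j ∈ s, a j‖ := by
        have h0 := norm_sub_le (1:ℂ) ((1:ℂ) - ∏ j ∈ s, a j)
        rwa [sub_sub_cancel] at h0
      rw [norm_one] at h1
      nlinarith
    rw [Finset.prod_cons, Finset.card_cons]
    have key : (1:ℂ) - a i * ∏ j ∈ s, a j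
        = ((1:ℂ) - ∏ j ∈ s, a j) + (∏ j ∈ s, a j) * ((1:ℂ) - a i) := by ring
    rw [key]
    refine (norm_add_le _ _).trans ?_
    rw [norm_mul]
    have hstep : ‖(∏ j ∈ s, a j)‖ * ‖(1:ℂ) - a i‖ ≤ 2^s.card * δ := by
      exact mul_le_mul hPn hai (norm_nonneg ((1:ℂ) - a i)) (by positivity : (0:ℝ) ≤ 2^s.card)
    have : (2:ℝ)^(s.card+1) = 2 * 2^s.card := by ring
    rw [this]
    linarith

set_option maxHeartbeats 1000000 in
private theorem one_dim' (I : Set Circle) (hne : I.Nonempty) (ho : IsOpen I)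
    (ε : ℝ) (hε : 0 < ε) :
    ∃ P : Polynomial ℂ, P.coeff 0 = 0 ∧ ∀ z : Circle, z ∉ I → ‖1 - P.eval (z:ℂ)‖ ≤ ε := by
  obtain ⟨w, hw⟩ := hne
  obtain ⟨r, hr0, hr⟩ := Metric.isOpen_iff.1 ho w hw
  set δ : ℝ := min r 1 with hδdef
  have hδ0 : 0 < δ := lt_min hr0 one_pos
  have hδ1 : δ ≤ 1 := min_le_right _ _
  have hxbound : ∀ z : Circle, z ∉ I → ((z:ℂ) * (starRingEnd ℂ) (w:ℂ)).re ≤ 1 - δ^2/2 := by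
    intro z hz
    have hdist : δ ≤ dist z w := by
      by_contra hlt
      push_neg at hlt
      exact hz (hr (Metric.mem_ball.2 (lt_of_lt_of_le hlt (min_le_left _ _))))
    have hdist2 : δ^2 ≤ dist z w ^ 2 := by
      have := dist_nonneg (x := z) (y := w)
      nlinarith
    have h2 : dist z w ^ 2 = 2 - 2*((z:ℂ) * (starRingEnd ℂ) (w:ℂ)).re := by
      rw [show dist z w = dist (z:ℂ) (w:ℂ) from rfl, Complex.dist_eq, Complex.sq_norm, Complex.normSq_sub]
      rw [Circle.normSq_coe, Circle.normSq_coe]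
      ring
    rw [h2] at hdist2
    linarith
  set q : ℝ := 1 - δ^2/4 with hqdef
  have hq0 : 0 ≤ q := by rw [hqdef]; nlinarith
  have hq1 : q < 1 := by rw [hqdef]; nlinarith
  have hMlim : Filter.Tendsto (fun n : ℕ => (2*(n:ℝ)+1) * q^n) Filter.atTop (nhds 0) := by
    have h1' : Filter.Tendsto (fun n : ℕ => (n:ℝ)^1 * q^n) Filter.atTop (nhds 0) :=
      (summable_pow_mul_geometric_of_norm_lt_one (R := ℝ) 1
        (by rwa [Real.norm_eq_abs, _root_.abs_of_nonneg hq0])).tendsto_atTop_zero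
    have h2' : Filter.Tendsto (fun n : ℕ => q^n) Filter.atTop (nhds 0) :=
      tendsto_pow_atTop_nhds_zero_of_lt_one hq0 hq1
    have h3' := (h1'.const_mul 2).add h2'
    simp only [mul_zero, add_zero, zero_add] at h3'
    convert h3' using 2 with n
    ring
  obtain ⟨M, hM2, hM1⟩ := ((hMlim.eventually_le_const (by norm_num : (0:ℝ) < 1/2)).and
      (Filter.eventually_ge_atTop 1)).exists
  set cb : ℕ := (2*M).choose M with hcbdef
  have hcb0 : 0 < (cb:ℝ) := by
    rw [hcbdef]
    exact_mod_cast Nat.choose_pos (by omega : M ≤ 2*M)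
  have hcb4 : (4:ℝ)^M ≤ (2*(M:ℝ)+1)*cb := by
    have := Nat.four_pow_le_two_mul_add_one_mul_central_binom M
    rw [hcbdef]
    exact_mod_cast this
  set Sp : Polynomial ℂ := ∑ i ∈ Finset.range M,
      Polynomial.C (((2*M).choose (M+1+i) : ℂ) * ((starRingEnd ℂ) (w:ℂ))^(i+1)) * Polynomial.X^(i+1)
    with hSpdef
  set Gp : Polynomial ℂ := Polynomial.C ((2/cb : ℝ) : ℂ) * Sp with hGpdef
  have habs : ∀ z : Circle, ‖(z:ℂ) * (starRingEnd ℂ) (w:ℂ)‖ = 1 := by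
    intro z; rw [norm_mul, Complex.norm_conj, Circle.norm_coe, Circle.norm_coe, one_mul]
  have hSpeval : ∀ z : Circle, Sp.eval (z:ℂ)
      = ∑ i ∈ Finset.range M, ((2*M).choose (M+1+i) : ℂ)
          * ((z:ℂ) * (starRingEnd ℂ) (w:ℂ))^(i+1) := by
    intro z
    rw [hSpdef, Polynomial.eval_finset_sum]
    refine Finset.sum_congr rfl fun i _ => ?_
    rw [Polynomial.eval_mul, Polynomial.eval_C, Polynomial.eval_pow, Polynomial.eval_X, mul_pow]
    ring
  have hGre : ∀ z : Circle, z ∉ I → (Gp.eval (z:ℂ)).re ≤ -(1/2) := by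
    intro z hz
    have hx : ((z:ℂ) * (starRingEnd ℂ) (w:ℂ)).re ≤ 1 - δ^2/2 := hxbound z hz
    have hxm : -1 ≤ ((z:ℂ) * (starRingEnd ℂ) (w:ℂ)).re := by
      have h1 := Complex.abs_re_le_norm ((z:ℂ) * (starRingEnd ℂ) (w:ℂ))
      rw [habs z] at h1
      linarith [(abs_le.1 h1).1]
    have heval : (Gp.eval (z:ℂ)).re = (2/cb) * (Sp.eval (z:ℂ)).re := by
      rw [hGpdef, Polynomial.eval_mul, Polynomial.eval_C, Complex.re_ofReal_mul]
    rw [heval, hSpeval z, fejer_re' M _ (habs z)]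
    set x : ℝ := ((z:ℂ) * (starRingEnd ℂ) (w:ℂ)).re with hxdef
    have hbase : (0:ℝ) ≤ 2 + 2*x := by linarith
    have hbase2 : 2 + 2*x ≤ 4*q := by rw [hqdef]; linarith
    have hp1 : (2+2*x)^M ≤ (4*q)^M := pow_le_pow_left₀ hbase hbase2 M
    have hp2 : ((4:ℝ)*q)^M = 4^M * q^M := mul_pow 4 q M
    have hqM : (0:ℝ) ≤ q^M := pow_nonneg hq0 M
    have hp3 : (4:ℝ)^M * q^M ≤ ((2*(M:ℝ)+1)*cb) * q^M := by nlinarith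
    have hp4 : ((2*(M:ℝ)+1)*cb) * q^M ≤ (1/2) * cb := by nlinarith
    have hfinal : (2+2*x)^M ≤ (1/2)*cb := by
      calc (2+2*x)^M ≤ (4*q)^M := hp1
        _ = 4^M * q^M := hp2
        _ ≤ ((2*(M:ℝ)+1)*cb) * q^M := hp3
        _ ≤ (1/2)*cb := hp4
    have hrw : (2/(cb:ℝ)) * (((2+2*x)^M - cb)/2) = ((2+2*x)^M - cb)/cb := by
      field_simp
    rw [hrw, div_le_iff₀ hcb0]
    linarith
  set B : ℝ := (2/cb) * ∑ i ∈ Finset.range M, ((2*M).choose (M+1+i) : ℝ) with hBdef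
  have hB0 : 0 ≤ B := by
    apply mul_nonneg (by positivity)
    exact Finset.sum_nonneg fun i _ => by positivity
  have hGnorm : ∀ z : Circle, ‖Gp.eval (z:ℂ)‖ ≤ B := by
    intro z
    rw [hGpdef, Polynomial.eval_mul, Polynomial.eval_C, norm_mul, hBdef]
    have h1 : ‖(((2/cb : ℝ)):ℂ)‖ = 2/cb := by
      rw [Complex.norm_real]
      exact abs_of_nonneg (by positivity)
    rw [h1]
    have h2 : ‖Sp.eval (z:ℂ)‖ ≤ ∑ i ∈ Finset.range M, ((2*M).choose (M+1+i) : ℝ) := by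
      rw [hSpeval z]
      refine (norm_sum_le _ _).trans ?_
      refine Finset.sum_le_sum fun i _ => ?_
      rw [norm_mul, norm_pow, RCLike.norm_natCast, habs z]
      simp
    have hpos : (0:ℝ) ≤ 2/cb := by positivity
    exact mul_le_mul_of_nonneg_left h2 hpos
  obtain ⟨n, hn⟩ := exists_nat_ge (2*(2/ε))
  have hexp : Real.exp (-((n:ℝ)/2)) ≤ ε/2 := by
    have hpos : 0 < 2/ε := by positivity
    have h2 : 2/ε ≤ Real.exp ((n:ℝ)/2) := by
      have := Real.add_one_le_exp ((n:ℝ)/2)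
      linarith
    rw [Real.exp_neg]
    calc (Real.exp ((n:ℝ)/2))⁻¹ ≤ (2/ε)⁻¹ := by
          apply inv_anti₀ hpos h2
      _ = ε/2 := by rw [inv_div]
  set R : ℝ := n * B with hRdef
  have hR0 : 0 ≤ R := mul_nonneg (Nat.cast_nonneg n) hB0
  have htail : Filter.Tendsto (fun m : ℕ => ∑' j : ℕ, R^(j+m)/((j+m).factorial : ℝ))
      Filter.atTop (nhds 0) := tendsto_sum_nat_add (fun j : ℕ => R^j / (j.factorial : ℝ))
  obtain ⟨m, hmtail, hm1⟩ := ((htail.eventually_le_const (by positivity : (0:ℝ) < ε/2)).and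
      (Filter.eventually_ge_atTop 1)).exists
  refine ⟨-(∑ j ∈ Finset.Ico 1 m, Polynomial.C ((j.factorial : ℂ)⁻¹)
      * (Polynomial.C (n:ℂ) * Gp)^j), ?_, ?_⟩
  · rw [Polynomial.coeff_zero_eq_eval_zero]
    have hG0 : Gp.eval 0 = 0 := by
      rw [hGpdef, Polynomial.eval_mul, hSpdef, Polynomial.eval_finset_sum]
      rw [Finset.sum_eq_zero, mul_zero]
      intro i _
      rw [Polynomial.eval_mul, Polynomial.eval_pow, Polynomial.eval_X]
      simp
    rw [Polynomial.eval_neg, Polynomial.eval_finset_sum]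
    rw [Finset.sum_eq_zero, neg_zero]
    intro j hj
    have hj1 : 1 ≤ j := (Finset.mem_Ico.1 hj).1
    rw [Polynomial.eval_mul, Polynomial.eval_pow, Polynomial.eval_mul, Polynomial.eval_C,
      Polynomial.eval_C, hG0, mul_zero, zero_pow (by omega : j ≠ 0), mul_zero]
  · intro z hz
    set H : ℂ := (n:ℂ) * Gp.eval (z:ℂ) with hHdef
    have hHnorm : ‖H‖ ≤ R := by
      rw [hHdef, norm_mul, RCLike.norm_natCast, hRdef]
      exact mul_le_mul_of_nonneg_left (hGnorm z) (Nat.cast_nonneg n)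
    have hHre : H.re ≤ -((n:ℝ)/2) := by
      have hre : H.re = (n:ℝ) * (Gp.eval (z:ℂ)).re := by
        rw [hHdef, show ((n:ℂ)) = (((n:ℝ)):ℂ) by push_cast; rfl, Complex.re_ofReal_mul]
      rw [hre]
      have hg := hGre z hz
      have hn0 : (0:ℝ) ≤ (n:ℝ) := Nat.cast_nonneg n
      nlinarith
    have heval : (1:ℂ) - Polynomial.eval (z:ℂ) (-(∑ j ∈ Finset.Ico 1 m,
          Polynomial.C ((j.factorial : ℂ)⁻¹) * (Polynomial.C (n:ℂ) * Gp)^j))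
        = ∑ j ∈ Finset.range m, H^j / (j.factorial : ℂ) := by
      rw [Polynomial.eval_neg, sub_neg_eq_add, Polynomial.eval_finset_sum]
      rw [Finset.range_eq_Ico, Finset.sum_eq_sum_Ico_succ_bot (show 0 < m by omega)]
      have h0 : H^0 / ((Nat.factorial 0 : ℕ) : ℂ) = 1 := by norm_num
      rw [h0]
      congr 1
      refine Finset.sum_congr rfl fun j hj => ?_
      rw [Polynomial.eval_mul, Polynomial.eval_pow, Polynomial.eval_mul, Polynomial.eval_C,
        Polynomial.eval_C, ← hHdef, div_eq_mul_inv]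
      ring
    rw [heval]
    have hsplit : ∑ j ∈ Finset.range m, H^j / (j.factorial : ℂ)
        = Complex.exp H - (Complex.exp H - ∑ j ∈ Finset.range m, H^j / (j.factorial : ℂ)) := by
      ring
    rw [hsplit]
    refine (norm_sub_le _ _).trans ?_
    have h1 : ‖Complex.exp H‖ ≤ ε/2 := by
      rw [Complex.norm_exp]
      exact le_trans (Real.exp_le_exp.2 hHre) hexp
    have h2 : ‖Complex.exp H - ∑ j ∈ Finset.range m, H^j / (j.factorial : ℂ)‖ ≤ ε/2 :=
      le_trans (exp_tail' R hR0 m H hHnorm) hmtail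
    linarith

set_option maxHeartbeats 1000000 in
/-- Proposition 3: for nonempty open subsets `I₁, …, I_d` of the unit circle, the set
`(𝕋∖I₁) × ⋯ × (𝕋∖I_d)` is approximable: the constant function `1` can be uniformly
approximated on it by polynomials all of whose monomials have every exponent at least `1`. -/
theorem corridors_approximable {d : ℕ} (hd : 1 ≤ d)
    (I : Fin d → Set Circle) (hI_ne : ∀ i, (I i).Nonempty) (hI_open : ∀ i, IsOpen (I i))
    (ε : ℝ) (hε : 0 < ε) :
    ∃ (F : Finset (Fin d → ℕ)) (h : (Fin d → ℕ) → ℂ),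
      (∀ m ∈ F, ∀ i, 1 ≤ m i) ∧
      ∀ z : Fin d → Circle, (∀ i, z i ∉ I i) →
        ‖1 - ∑ m ∈ F, h m * ∏ i, ((z i : ℂ) ^ (m i))‖ ≤ ε := by
  set δ : ℝ := min 1 (ε / 2^d) with hδdef
  have hδ0 : 0 < δ := lt_min one_pos (by positivity)
  have hδ1 : δ ≤ 1 := min_le_left _ _
  choose P hP0 hPb using fun i => one_dim' (I i) (hI_ne i) (hI_open i) δ hδ0
  refine ⟨Fintype.piFinset (fun i => (P i).support), fun m => ∏ i, (P i).coeff (m i), ?_, ?_⟩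
  · intro m hm i
    have hmi : m i ∈ (P i).support := (Fintype.mem_piFinset.1 hm) i
    have hne0 : m i ≠ 0 := by
      intro h0
      rw [h0] at hmi
      exact (Polynomial.mem_support_iff.1 hmi) (hP0 i)
    omega
  · intro z hz
    have heval : ∀ i, (P i).eval ((z i : ℂ))
        = ∑ k ∈ (P i).support, (P i).coeff k * ((z i : ℂ))^k := fun i => by
      rw [Polynomial.eval_eq_sum, Polynomial.sum_def]
    have hsum : ∑ m ∈ Fintype.piFinset (fun i => (P i).support),
        (∏ i, (P i).coeff (m i)) * ∏ i, ((z i : ℂ) ^ (m i))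
        = ∏ i, (P i).eval ((z i : ℂ)) := by
      calc ∑ m ∈ Fintype.piFinset (fun i => (P i).support),
            (∏ i, (P i).coeff (m i)) * ∏ i, ((z i : ℂ) ^ (m i))
          = ∑ m ∈ Fintype.piFinset (fun i => (P i).support),
            ∏ i, ((P i).coeff (m i) * ((z i : ℂ))^(m i)) := by
            refine Finset.sum_congr rfl fun m _ => ?_
            rw [← Finset.prod_mul_distrib]
        _ = ∏ i, ∑ k ∈ (P i).support, (P i).coeff k * ((z i : ℂ))^k :=
            (Finset.prod_univ_sum (fun i => (P i).support) (fun i k => (P i).coeff k * ((z i : ℂ))^k)).symm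
        _ = ∏ i, (P i).eval ((z i : ℂ)) := by
            exact Finset.prod_congr rfl fun i _ => (heval i).symm
    rw [hsum]
    have hclose := prod_close' Finset.univ (fun i => (P i).eval ((z i : ℂ))) δ hδ0.le hδ1
      (fun i _ => hPb i (z i) (hz i))
    rw [Finset.card_univ, Fintype.card_fin] at hclose
    refine hclose.trans ?_
    have h1 : δ ≤ ε/2^d := min_le_right _ _
    have h2 : (0:ℝ) < 2^d := by positivity
    have h2c : (1:ℝ) ≤ 2^d := one_le_pow₀ (by norm_num)
    have h3 : ((2:ℝ)^d - 1)*(ε/2^d) = ε - ε/2^d := by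
      field_simp
    have h4 : (0:ℝ) ≤ ε/2^d := by positivity
    calc ((2:ℝ)^d - 1)*δ ≤ ((2:ℝ)^d - 1)*(ε/2^d) := by
          apply mul_le_mul_of_nonneg_left h1 (by linarith)
      _ = ε - ε/2^d := h3
      _ ≤ ε := by linarith
end
end

section
/- Let S be a finite nonnegative Borel measure on the unit torus 𝕋^d = {z ∈ ℂ^d : |z_i| = 1 for all i}. Assume there is a closed set K ⊆ 𝕋^d with S(𝕋^d ∖ K) = 0 such that for every ε > 0 there exist a finite set F ⊆ {m ∈ ℤ^d : m_i ≥ 1 for all i} and coefficients (h_m)_{m∈F} in ℂ with sup_{z∈K} |1 − Σ_{m∈F} h_m z^m| ≤ ε. For n ≥ 1 define e_n(S) = inf over all h : {1,…,n}^d → ℂ of ∫_{𝕋^d} |1 − Σ_{m∈{1,…,n}^d} h_m z^m|² dS(z). Then Σ_{n≥1} n^{d−1} e_n(S) < ∞. -/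
open MeasureTheory Complex

noncomputable section

/-- Best `L²(S)` interpolation error of the constant `1` by polynomials with exponents in
`{1,…,n}^d`. -/
def interpError {d : ℕ} (S : Measure (Fin d → Circle)) (n : ℕ) : ℝ :=
  ⨅ h : (Fin d → ℕ) → ℂ,
    ∫ z, ‖(1 : ℂ) - ∑ m ∈ Fintype.piFinset (fun _ : Fin d => Finset.Icc 1 n),
      h m * ∏ i, ((z i : ℂ) ^ (m i))‖ ^ 2 ∂S

def Mon (m : Fin d → ℕ) : (Fin d → Circle) → ℂ := fun z => ∏ i, ((z i : ℂ) ^ (m i))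

def TrigSet (n : ℕ) : Set ((Fin d → Circle) → ℂ) :=
  Mon '' {m : Fin d → ℕ | ∀ i, 1 ≤ m i ∧ m i ≤ n}

def Trig (n : ℕ) : Submodule ℂ ((Fin d → Circle) → ℂ) := Submodule.span ℂ (TrigSet n)

lemma Trig_mono {a b : ℕ} (h : a ≤ b) : (Trig a : Submodule ℂ ((Fin d → Circle) → ℂ)) ≤ Trig b :=
  Submodule.span_mono (Set.image_mono fun m hm i => ⟨(hm i).1, le_trans (hm i).2 h⟩)

lemma Mon_mul (m m' : Fin d → ℕ) : Mon m * Mon m' = Mon (m + m') := by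
  funext z
  simp only [Mon, Pi.mul_apply, Pi.add_apply, pow_add, ← Finset.prod_mul_distrib]

lemma Trig_mul {a b : ℕ} {f g : (Fin d → Circle) → ℂ} (hf : f ∈ Trig (d := d) a)
    (hg : g ∈ Trig b) : f * g ∈ Trig (a + b) := by
  have : (Trig a : Submodule ℂ ((Fin d → Circle) → ℂ)) * Trig b ≤ Trig (a + b) := by
    rw [Trig, Trig, Submodule.span_mul_span]
    apply Submodule.span_mono
    rintro x ⟨u, hu, v, hv, rfl⟩
    obtain ⟨m, hm, rfl⟩ := hu
    obtain ⟨m', hm', rfl⟩ := hv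
    exact ⟨m + m', fun i => ⟨le_add_right (hm i).1, add_le_add (hm i).2 (hm' i).2⟩, (Mon_mul m m').symm⟩
  exact this (Submodule.mul_mem_mul hf hg)

/-- extraction of coefficients -/
lemma Trig_repr {n : ℕ} {f : (Fin d → Circle) → ℂ} (hf : f ∈ Trig n) :
    ∃ h : (Fin d → ℕ) → ℂ, f = fun z =>
      ∑ m ∈ Fintype.piFinset (fun _ : Fin d => Finset.Icc 1 n), h m * Mon m z := by
  induction hf using Submodule.span_induction with
  | mem x hx =>
      obtain ⟨m0, hm0, rfl⟩ := hx
      refine ⟨fun m => if m = m0 then 1 else 0, ?_⟩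
      funext z
      rw [Finset.sum_eq_single m0]
      · simp
      · intro m _ hm; simp [hm]
      · intro hm; exact absurd (Fintype.mem_piFinset.2 fun i => Finset.mem_Icc.2 (hm0 i)) hm
  | zero => exact ⟨0, by funext z; simp⟩
  | add x y _ _ hx hy =>
      obtain ⟨h1, rfl⟩ := hx; obtain ⟨h2, rfl⟩ := hy
      exact ⟨h1 + h2, by funext z; simp [add_mul, Finset.sum_add_distrib]⟩
  | smul c x _ hx =>
      obtain ⟨h1, rfl⟩ := hx
      exact ⟨c • h1, by funext z; simp [Finset.mul_sum, mul_assoc]⟩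

lemma interpError_nonneg (S : Measure (Fin d → Circle)) (n : ℕ) : 0 ≤ interpError S n := by
  refine le_ciInf fun h => integral_nonneg fun z => by positivity

lemma interpError_le_of_mem (S : Measure (Fin d → Circle)) {n : ℕ}
    {f : (Fin d → Circle) → ℂ} (hf : f ∈ Trig n) :
    interpError S n ≤ ∫ z, ‖(1 : ℂ) - f z‖ ^ 2 ∂S := by
  obtain ⟨h, rfl⟩ := Trig_repr hf
  exact ciInf_le ⟨0, fun x ⟨h', hx⟩ => hx ▸ integral_nonneg fun z => by positivity⟩ h

lemma integral_bound (S : Measure (Fin d → Circle)) [IsFiniteMeasure S]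
    {K : Set (Fin d → Circle)} (hSK : S Kᶜ = 0)
    {f : (Fin d → Circle) → ℂ} (hf : Continuous f) {b : ℝ} (hb : 0 ≤ b)
    (hK : ∀ z ∈ K, ‖(1 : ℂ) - f z‖ ≤ b) :
    ∫ z, ‖(1 : ℂ) - f z‖ ^ 2 ∂S ≤ b ^ 2 * (S Set.univ).toReal := by
  have hcont : Continuous fun z => ‖(1 : ℂ) - f z‖ ^ 2 := by fun_prop
  have hint : Integrable (fun z => ‖(1 : ℂ) - f z‖ ^ 2) S :=
    hcont.integrable_of_hasCompactSupport (HasCompactSupport.of_compactSpace _)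
  have : ∫ z, ‖(1 : ℂ) - f z‖ ^ 2 ∂S ≤ ∫ _, b ^ 2 ∂S := by
    refine integral_mono_ae hint (integrable_const _) ?_
    refine Filter.Eventually.mono (measure_eq_zero_iff_ae_notMem.1 hSK) fun z hz => ?_
    have hzK : z ∈ K := by simpa using hz
    exact pow_le_pow_left₀ (norm_nonneg _) (hK z hzK) 2
  simpa [mul_comm, Measure.real] using this


set_option maxHeartbeats 1000000 in
/-- Proposition 4 (strong interpolability): if the support of a finite measure `S` on the
torus `𝕋^d` is contained in a closed set `K` on which `1` is uniformly approximable by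
polynomials with all exponents at least `1`, then `Σ n^{d-1} e_n(S) < ∞`. -/
theorem strong_interpolability {d : ℕ}
    (S : Measure (Fin d → Circle)) [IsFiniteMeasure S]
    (K : Set (Fin d → Circle)) (hK_closed : IsClosed K) (hSK : S Kᶜ = 0)
    (happrox : ∀ ε : ℝ, 0 < ε →
      ∃ (F : Finset (Fin d → ℕ)) (h : (Fin d → ℕ) → ℂ),
        (∀ m ∈ F, ∀ i, 1 ≤ m i) ∧
        ∀ z ∈ K, ‖(1 : ℂ) - ∑ m ∈ F, h m * ∏ i, ((z i : ℂ) ^ (m i))‖ ≤ ε) :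
    Summable (fun n : ℕ => (n : ℝ) ^ (d - 1) * interpError S n) := by
  obtain ⟨F, hco, hF1, hclose⟩ := happrox (1/2) (by norm_num)
  set C : ℝ := (S Set.univ).toReal with hC
  have hC0 : 0 ≤ C := ENNReal.toReal_nonneg
  set N : ℕ := max 1 (F.sup fun m => Finset.univ.sup m) with hN
  have hN1 : 1 ≤ N := le_max_left _ _
  have hNpos : 0 < N := hN1
  set P : (Fin d → Circle) → ℂ := fun z => ∑ m ∈ F, hco m * Mon m z with hP
  have hdeg : ∀ m ∈ F, ∀ i, m i ≤ N := fun m hm i =>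
    le_trans (Finset.le_sup (Finset.mem_univ i)) (le_trans (Finset.le_sup hm) (le_max_right _ _))
  have hPsum : P = ∑ m ∈ F, hco m • Mon m := by
    funext z; simp [hP, Finset.sum_apply]
  have hPmem : P ∈ Trig (d := d) N := by
    rw [hPsum]
    exact Submodule.sum_mem _ fun m hm => Submodule.smul_mem _ _
      (Submodule.subset_span ⟨m, fun i => ⟨hF1 m hm i, hdeg m hm i⟩, rfl⟩)
  have hPcont : Continuous P := by
    apply continuous_finset_sum
    intro m _
    exact continuous_const.mul (by unfold Mon; fun_prop)
  set Q : ℕ → ((Fin d → Circle) → ℂ) := fun j => 1 - (1 - P) ^ j with hQ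
  have hQmem : ∀ j, 1 ≤ j → Q j ∈ Trig (d := d) (j * N) := by
    intro j hj
    induction j, hj using Nat.le_induction with
    | base =>
        have h1 : Q 1 = P := by simp only [hQ]; ring
        rw [h1, one_mul]; exact hPmem
    | succ j hj ih =>
        have hdecomp : Q (j + 1) = Q j + P - Q j * P := by simp only [hQ]; ring
        rw [hdecomp, add_mul, one_mul]
        exact sub_mem (add_mem (Trig_mono (Nat.le_add_right _ _) ih)
          (Trig_mono (Nat.le_add_left _ _) hPmem)) (Trig_mul ih hPmem)
  have hQeq : ∀ j, Q j = fun z => 1 - (1 - P z) ^ j := by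
    intro j; funext z; simp [hQ]
  have hQcont : ∀ j, Continuous (Q j) := by
    intro j; rw [hQeq]; fun_prop
  have hQbound : ∀ j, ∀ z ∈ K, ‖(1 : ℂ) - Q j z‖ ≤ (1/2 : ℝ) ^ j := by
    intro j z hz
    have h1 : (1 : ℂ) - Q j z = (1 - P z) ^ j := by rw [hQeq]; ring
    rw [h1, norm_pow]
    exact pow_le_pow_left₀ (norm_nonneg _) (hclose z hz) j
  have key : ∀ m : ℕ, N ≤ m → interpError S m ≤ C * (1/4 : ℝ) ^ (m / N) := by
    intro m hm
    set j := m / N with hj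
    have hj1 : 1 ≤ j := (Nat.one_le_div_iff hNpos).2 hm
    have hmem : Q j ∈ Trig (d := d) m :=
      Trig_mono (Nat.div_mul_le_self m N) (hQmem j hj1)
    calc interpError S m ≤ ∫ z, ‖(1 : ℂ) - Q j z‖ ^ 2 ∂S := interpError_le_of_mem S hmem
      _ ≤ ((1/2 : ℝ) ^ j) ^ 2 * C :=
          integral_bound S hSK (hQcont j) (by positivity) (hQbound j)
      _ = C * (1/4 : ℝ) ^ j := by
          rw [show (1/4 : ℝ) = (1/2) ^ 2 by norm_num, ← pow_mul, ← pow_mul, mul_comm j 2,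
            mul_comm]
  -- geometric comparison
  set r : ℝ := (1/4 : ℝ) ^ ((N : ℝ)⁻¹) with hr
  have hr0 : 0 < r := Real.rpow_pos_of_pos (by norm_num) _
  have hr1 : r < 1 := Real.rpow_lt_one (by norm_num) (by norm_num) (by positivity)
  have hrN : r ^ N = 1/4 := Real.rpow_inv_natCast_pow (by norm_num) hNpos.ne'
  set c : ℝ := r ^ (N - 1) with hc
  have hcpos : 0 < c := by positivity
  have hgeom : ∀ m : ℕ, (1/4 : ℝ) ^ (m / N) * c ≤ r ^ m := by
    intro m
    have h1 : (1/4 : ℝ) ^ (m / N) = r ^ (N * (m / N)) := by rw [pow_mul, hrN]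
    have h2 : m ≤ N * (m / N) + (N - 1) := by
      have := Nat.div_add_mod m N
      have hmod : m % N ≤ N - 1 := Nat.le_pred_of_lt (Nat.mod_lt _ hNpos)
      omega
    calc (1/4 : ℝ) ^ (m / N) * c = r ^ (N * (m / N) + (N - 1)) := by
          rw [h1, hc, pow_add]
      _ ≤ r ^ m := pow_le_pow_of_le_one hr0.le hr1.le h2
  -- final summability
  rw [← summable_nat_add_iff N]
  have base : Summable (fun k : ℕ => (k : ℝ) ^ (d - 1) * r ^ k) :=
    summable_pow_mul_geometric_of_norm_lt_one (d - 1)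
      (by rw [Real.norm_eq_abs, abs_of_pos hr0]; exact hr1)
  have shift : Summable (fun k : ℕ => ((k + 1 : ℕ) : ℝ) ^ (d - 1) * r ^ (k + 1)) :=
    (summable_nat_add_iff 1).2 base
  have shift2 : Summable (fun k : ℕ => ((k + 1 : ℕ) : ℝ) ^ (d - 1) * r ^ k) := by
    have := shift.mul_right r⁻¹
    refine this.congr fun k => ?_
    rw [pow_succ, mul_assoc, mul_assoc, mul_inv_cancel₀ hr0.ne', mul_one]
  refine Summable.of_nonneg_of_le
    (fun k => mul_nonneg (pow_nonneg (Nat.cast_nonneg _) _) (interpError_nonneg S _))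
    (fun k => ?_) ((shift2.mul_left ((N : ℝ) ^ (d - 1) * (C / c))))
  have hkey := key (k + N) (Nat.le_add_left N k)
  have hquarter : (1/4 : ℝ) ^ ((k + N) / N) ≤ r ^ k / c := by
    rw [le_div_iff₀ hcpos]
    calc (1/4 : ℝ) ^ ((k + N) / N) * c ≤ r ^ (k + N) := hgeom (k + N)
      _ ≤ r ^ k := pow_le_pow_of_le_one hr0.le hr1.le (Nat.le_add_right k N)
  have hcast : ((k + N : ℕ) : ℝ) ^ (d - 1) ≤ (N : ℝ) ^ (d - 1) * ((k + 1 : ℕ) : ℝ) ^ (d - 1) := by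
    rw [← mul_pow]
    refine pow_le_pow_left₀ (Nat.cast_nonneg _) ?_ _
    have : (k + N : ℕ) ≤ N * (k + 1) := by nlinarith [hN1]
    exact_mod_cast this
  calc ((k + N : ℕ) : ℝ) ^ (d - 1) * interpError S (k + N)
      ≤ ((N : ℝ) ^ (d - 1) * ((k + 1 : ℕ) : ℝ) ^ (d - 1)) * (C * (r ^ k / c)) := by
        refine mul_le_mul hcast ?_ (interpError_nonneg S _) (by positivity)
        exact le_trans hkey (mul_le_mul_of_nonneg_left hquarter hC0)
    _ = (N : ℝ) ^ (d - 1) * (C / c) * (((k + 1 : ℕ) : ℝ) ^ (d - 1) * r ^ k) := by ring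
end
end

section
/- Let 𝕌 ⊆ ℂ be uniformly discrete, i.e. inf{|z−z'| : z, z' ∈ 𝕌, z ≠ z'} > 0. Let X = (X_m)_{m∈ℤ^d} be square-integrable complex random variables on a probability space, measurable as a map into ℤ^d → ℂ with the product σ-algebra, taking values in 𝕌 almost surely, and strongly stationary: for every k ∈ ℤ^d, (X_{m+k})_{m∈ℤ^d} has the same law as X. For n ≥ 1 and a sign vector ε ∈ {−1,1}^d define e_n^ε = inf over all h : {1,…,n}^d → ℂ of E|X_0 − Σ_{m∈{1,…,n}^d} h_m X_{(ε_1 m_1,…,ε_d m_d)}|². Assume that Σ_{n≥1} n^{d−1} e_n^ε < ∞ for every ε ∈ {−1,1}^d (X is strongly interpolable from every orthant). Then almost surely there exists N ∈ ℤ^d with all coordinates positive such that X_{m+N} = X_m for all m ∈ ℤ^d. -/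
open MeasureTheory Complex
open scoped ENNReal NNReal

noncomputable section

namespace SIP

variable {d : ℕ}

def rad (p : Fin d → ℤ) : ℕ := Finset.univ.sup fun i => (p i).natAbs

def box (d n : ℕ) : Finset (Fin d → ℕ) := Fintype.piFinset fun _ : Fin d => Finset.Icc 1 n

def sg (p : Fin d → ℤ) : Fin d → ℤ := fun i => if 0 ≤ p i then -1 else 1

lemma sg_pm (p : Fin d → ℤ) (i : Fin d) : sg p i = 1 ∨ sg p i = -1 := by
  unfold sg; split <;> simp

lemma natAbs_le_rad (p : Fin d → ℤ) (i : Fin d) : (p i).natAbs ≤ rad p :=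
  Finset.le_sup (f := fun i => (p i).natAbs) (Finset.mem_univ i)

lemma rad_window {p : Fin d → ℤ} {m : Fin d → ℕ} (hm : m ∈ box d (rad p - 1)) :
    rad (fun i => p i + sg p i * (m i : ℤ)) ≤ rad p - 1 := by
  apply Finset.sup_le
  intro i _
  have h1 : 1 ≤ m i ∧ m i ≤ rad p - 1 := by
    simpa using (Fintype.mem_piFinset.mp hm) i
  have h2 : (p i).natAbs ≤ rad p := natAbs_le_rad p i
  show (p i + sg p i * (m i : ℤ)).natAbs ≤ rad p - 1
  by_cases h : 0 ≤ p i
  · rw [show sg p i = -1 from if_pos h]; omega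
  · rw [show sg p i = 1 from if_neg h]; omega

lemma rad_lt_of_window {p : Fin d → ℤ} (hp : 1 ≤ rad p) {m : Fin d → ℕ}
    (hm : m ∈ box d (rad p - 1)) :
    rad (fun i => p i + sg p i * (m i : ℤ)) < rad p :=
  lt_of_le_of_lt (rad_window hm) (by omega)

/-- Rigidity: two configurations valued in a `δ`-separated set, satisfying the same
prediction rules outside a central block and agreeing on the block, are equal. -/
lemma rigidity {δ : ℝ} (hδ0 : 0 < δ) {U : Set ℂ}
    (hsep : ∀ z ∈ U, ∀ z' ∈ U, z ≠ z' → δ ≤ ‖z - z'‖)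
    (hc : (Fin d → ℤ) → (Fin d → ℕ) → ℂ) (M : ℕ)
    (x y : (Fin d → ℤ) → ℂ) (hxU : ∀ q, x q ∈ U) (hyU : ∀ q, y q ∈ U)
    (hx : ∀ p, M < rad p →
      ‖x p - ∑ m ∈ box d (rad p - 1), hc p m * x (fun i => p i + sg p i * (m i : ℤ))‖ < δ/3)
    (hy : ∀ p, M < rad p →
      ‖y p - ∑ m ∈ box d (rad p - 1), hc p m * y (fun i => p i + sg p i * (m i : ℤ))‖ < δ/3)
    (hagree : ∀ q, rad q ≤ M → x q = y q) : x = y := by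
  have H : ∀ r : ℕ, ∀ p, rad p ≤ r → x p = y p := by
    intro r
    induction r using Nat.strong_induction_on with
    | _ r IH =>
      intro p hp
      by_cases hM : rad p ≤ M
      · exact hagree p hM
      push_neg at hM
      have hr1 : 1 ≤ rad p := by omega
      have hsum : (∑ m ∈ box d (rad p - 1), hc p m * x (fun i => p i + sg p i * (m i : ℤ)))
          = ∑ m ∈ box d (rad p - 1), hc p m * y (fun i => p i + sg p i * (m i : ℤ)) := by
        apply Finset.sum_congr rfl
        intro m hm
        have hlt := rad_lt_of_window hr1 hm
        have := IH (rad p - 1) (by omega) _ (rad_window hm)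
        rw [this]
      have h1 := hx p hM
      have h2 := hy p hM
      rw [hsum] at h1
      by_contra hne
      have hδ := hsep _ (hxU p) _ (hyU p) hne
      have : ‖x p - y p‖ ≤ ‖x p - ∑ m ∈ box d (rad p - 1), hc p m *
            y (fun i => p i + sg p i * (m i : ℤ))‖ + ‖y p - ∑ m ∈ box d (rad p - 1), hc p m *
            y (fun i => p i + sg p i * (m i : ℤ))‖ := by
        have := norm_sub_le_norm_sub_add_norm_sub (x p)
          (∑ m ∈ box d (rad p - 1), hc p m * y (fun i => p i + sg p i * (m i : ℤ))) (y p)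
        calc ‖x p - y p‖ ≤ _ := this
        _ ≤ _ := by rw [← norm_neg (_ - y p)]; simp [neg_sub]
      linarith
  funext p
  exact H (rad p) p le_rfl

lemma pow_succ_le {a c : ℕ} : ∀ k, (a+c)^(k+1) ≤ a^(k+1) + (k+1)*c*(a+c)^k := by
  intro k
  induction k with
  | zero => simp
  | succ k IH =>
    have hab : a^(k+1) ≤ (a+c)^(k+1) := Nat.pow_le_pow_left (by omega) _
    calc (a+c)^(k+2) = (a+c) * (a+c)^(k+1) := by ring
    _ ≤ (a+c) * (a^(k+1) + (k+1)*c*(a+c)^k) := Nat.mul_le_mul_left _ IH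
    _ = a^(k+2) + c*a^(k+1) + (k+1)*c*(a+c)^(k+1) := by ring
    _ ≤ a^(k+2) + c*(a+c)^(k+1) + (k+1)*c*(a+c)^(k+1) := by
        have := Nat.mul_le_mul_left c hab; omega
    _ = a^(k+2) + (k+2)*c*(a+c)^(k+1) := by ring

def sphere (d n : ℕ) : Finset (Fin d → ℤ) :=
  (Fintype.piFinset fun _ : Fin d => Finset.Icc (-(n:ℤ)) n).filter fun p => rad p = n

lemma mem_sphere_of_rad {p : Fin d → ℤ} : p ∈ sphere d (rad p) := by
  rw [sphere, Finset.mem_filter, Fintype.mem_piFinset]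
  refine ⟨fun i => ?_, rfl⟩
  have : (p i).natAbs ≤ rad p := natAbs_le_rad p i
  rw [Finset.mem_Icc]; omega

lemma rad_of_mem_sphere {n : ℕ} {p : Fin d → ℤ} (hp : p ∈ sphere d n) : rad p = n :=
  (Finset.mem_filter.mp hp).2

lemma card_sphere_le (hd : 1 ≤ d) {n : ℕ} (hn : 1 ≤ n) :
    (sphere d n).card ≤ 2*d*(3*n)^(d-1) := by
  have hsub : sphere d n ⊆ (Fintype.piFinset fun _ : Fin d => Finset.Icc (-(n:ℤ)) n) \
      (Fintype.piFinset fun _ : Fin d => Finset.Icc (-((n:ℤ)-1)) ((n:ℤ)-1)) := by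
    intro p hp
    rw [sphere, Finset.mem_filter] at hp
    rw [Finset.mem_sdiff]
    refine ⟨hp.1, fun hmem => ?_⟩
    rw [Fintype.mem_piFinset] at hmem
    have : rad p ≤ n - 1 := by
      apply Finset.sup_le
      intro i _
      have := hmem i
      rw [Finset.mem_Icc] at this
      omega
    omega
  have hcard := Finset.card_le_card hsub
  have hss : (Fintype.piFinset fun _ : Fin d => Finset.Icc (-((n:ℤ)-1)) ((n:ℤ)-1)) ⊆
      (Fintype.piFinset fun _ : Fin d => Finset.Icc (-(n:ℤ)) n) := by
    intro p hp
    rw [Fintype.mem_piFinset] at hp ⊢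
    intro i
    have := hp i
    rw [Finset.mem_Icc] at this ⊢
    omega
  rw [Finset.card_sdiff_of_subset hss] at hcard
  have c1 : (Fintype.piFinset fun _ : Fin d => Finset.Icc (-(n:ℤ)) n).card = (2*n+1)^d := by
    rw [Fintype.card_piFinset]
    simp [Int.card_Icc]
    congr 1
    omega
  have c2 : (Fintype.piFinset fun _ : Fin d => Finset.Icc (-((n:ℤ)-1)) ((n:ℤ)-1)).card
      = (2*n-1)^d := by
    rw [Fintype.card_piFinset]
    simp [Int.card_Icc]
    congr 1
    omega
  rw [c1, c2] at hcard
  obtain ⟨e, he⟩ : ∃ e, d = e + 1 := ⟨d - 1, by omega⟩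
  subst he
  have key : (2*n+1)^(e+1) ≤ (2*n-1)^(e+1) + (e+1)*2*(2*n+1)^e := by
    have h2 : 2*n+1 = (2*n-1) + 2 := by omega
    rw [h2]
    exact pow_succ_le (a := 2*n-1) (c := 2) e
  have hpow : (2*n+1)^e ≤ (3*n)^e := Nat.pow_le_pow_left (by omega) _
  have hcc : (sphere (e+1) n).card ≤ (e+1)*2*(2*n+1)^e := by omega
  calc (sphere (e+1) n).card ≤ (e+1)*2*(2*n+1)^e := hcc
  _ ≤ 2*(e+1)*(3*n)^e := by
      rw [show (e+1)*2 = 2*(e+1) by ring]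
      exact Nat.mul_le_mul_left _ hpow
  _ = 2*(e+1)*(3*n)^((e+1)-1) := by simp

lemma atom_periodic (μ : Measure ((Fin d → ℤ) → ℂ)) [IsProbabilityMeasure μ]
    (hshift : ∀ k : Fin d → ℤ,
      MeasurePreserving (fun x (m : Fin d → ℤ) => x (m + k)) μ μ)
    (x : (Fin d → ℤ) → ℂ) (hx : μ {x} ≠ 0) :
    ∃ N : Fin d → ℤ, (∀ i, 0 < N i) ∧ ∀ m, x (m + N) = x m := by
  by_contra hper
  push_neg at hper
  set z : ℕ → ((Fin d → ℤ) → ℂ) := fun j => (fun m => x (m + fun _ => -(j:ℤ))) with hz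
  have hpre : ∀ j : ℕ,
      (fun y (m : Fin d → ℤ) => y (m + fun _ => (j:ℤ))) ⁻¹' {x} = {z j} := by
    intro j
    ext y
    simp only [Set.mem_preimage, Set.mem_singleton_iff]
    constructor
    · intro h
      funext m
      calc y m = y ((m + fun _ => -(j:ℤ)) + fun _ => (j:ℤ)) := by
            congr 1; funext i; simp
      _ = x (m + fun _ => -(j:ℤ)) := congrFun h _
    · intro h
      subst h
      funext m
      show x ((m + fun _ => (j:ℤ)) + fun _ => -(j:ℤ)) = x m
      congr 1; funext i; simp
  have hmeaseq : ∀ j : ℕ, μ {z j} = μ {x} := by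
    intro j
    rw [← hpre j]
    exact (hshift _).measure_preimage (measurableSet_singleton x).nullMeasurableSet
  have hinj : Function.Injective z := by
    intro i j hij
    by_contra hne
    wlog hlt : i < j generalizing i j
    · exact this hij.symm (Ne.symm hne) (by omega)
    set N : Fin d → ℤ := fun _ => (j:ℤ) - (i:ℤ) with hN
    obtain ⟨m, hm⟩ := hper N (fun i_ => by simp [hN]; omega)
    apply hm
    have := congrFun hij (m + fun _ => (j:ℤ))
    simp only [hz] at this
    calc x (m + N) = x ((m + fun _ => (j:ℤ)) + fun _ => -(i:ℤ)) := by
          congr 1; funext i_; simp [hN]; ring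
    _ = x ((m + fun _ => (j:ℤ)) + fun _ => -(j:ℤ)) := this
    _ = x m := by congr 1; funext i_; simp
  have hdisj : Pairwise (Function.onFun Disjoint fun j => ({z j} : Set ((Fin d → ℤ) → ℂ))) := by
    intro i j hij
    simp [Function.onFun, Set.disjoint_singleton, hinj.ne hij]
  have hμU : μ (⋃ j : ℕ, {z j}) = ∑' _ : ℕ, μ {x} := by
    rw [measure_iUnion hdisj fun j => measurableSet_singleton _]
    simp [hmeaseq]
  have htop : μ (⋃ j : ℕ, {z j}) = ⊤ := by
    rw [hμU]; exact ENNReal.tsum_const_eq_top_of_ne_zero hx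
  have hle : μ (⋃ j : ℕ, {z j}) ≤ 1 :=
    (measure_mono (Set.subset_univ _)).trans_eq measure_univ
  rw [htop] at hle
  simp at hle

end SIP

open SIP Filter

/-- Proposition 5: a strongly stationary field on `ℤ^d` with values in a uniformly discrete
set `𝕌 ⊆ ℂ` which is strongly interpolable from every orthant
(`Σ_n n^{d-1} e_n^ε < ∞` for every sign vector `ε`) is almost surely periodic. -/
theorem strongly_interpolable_periodic {d : ℕ} (hd : 1 ≤ d)
    (U : Set ℂ) (hU : ∃ δ : ℝ, 0 < δ ∧ ∀ z ∈ U, ∀ z' ∈ U, z ≠ z' → δ ≤ ‖z - z'‖)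
    {Ω : Type} [MeasurableSpace Ω] (P : Measure Ω) [IsProbabilityMeasure P]
    (X : (Fin d → ℤ) → Ω → ℂ)
    (hmeas : Measurable fun ω => (fun m => X m ω : (Fin d → ℤ) → ℂ))
    (hL2 : ∀ m, MemLp (X m) 2 P)
    (hval : ∀ᵐ ω ∂P, ∀ m, X m ω ∈ U)
    (hstat : ∀ k : Fin d → ℤ,
      Measure.map (fun ω => (fun m => X (m + k) ω : (Fin d → ℤ) → ℂ)) P
        = Measure.map (fun ω => (fun m => X m ω : (Fin d → ℤ) → ℂ)) P)
    (hinterp : ∀ sgn : Fin d → ℤ, (∀ i, sgn i = 1 ∨ sgn i = -1) →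
      Summable (fun n : ℕ => (n : ℝ) ^ (d - 1) *
        ⨅ h : (Fin d → ℕ) → ℂ,
          ∫ ω, ‖X 0 ω - ∑ m ∈ Fintype.piFinset (fun _ : Fin d => Finset.Icc 1 n),
            h m * X (fun i => sgn i * (m i : ℤ)) ω‖ ^ 2 ∂P)) :
    ∀ᵐ ω ∂P, ∃ N : Fin d → ℤ, (∀ i, 0 < N i) ∧ ∀ m, X (m + N) ω = X m ω := by
  classical
  obtain ⟨δ, hδ0, hsep⟩ := hU
  set Φ : Ω → ((Fin d → ℤ) → ℂ) := fun ω m => X m ω with hΦ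
  have hΦm : Measurable Φ := hmeas
  set μ : Measure ((Fin d → ℤ) → ℂ) := Measure.map Φ P with hμ
  haveI : IsProbabilityMeasure μ := Measure.isProbabilityMeasure_map hΦm.aemeasurable
  -- shifts are measure preserving
  have hSm : ∀ k : Fin d → ℤ, Measurable (fun (x : (Fin d → ℤ) → ℂ) (m : Fin d → ℤ) => x (m + k)) :=
    fun k => measurable_pi_lambda _ fun m => measurable_pi_apply (m + k)
  have hSP : ∀ k : Fin d → ℤ,
      MeasurePreserving (fun x (m : Fin d → ℤ) => x (m + k)) μ μ := by
    intro k
    refine ⟨hSm k, ?_⟩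
    rw [hμ, Measure.map_map (hSm k) hΦm]
    exact hstat k
  -- error functional
  set E : (Fin d → ℤ) → ℕ → ℝ := fun ε n => ⨅ h : (Fin d → ℕ) → ℂ,
      ∫ ω, ‖X 0 ω - ∑ m ∈ box d n, h m * X (fun i => ε i * (m i : ℤ)) ω‖ ^ 2 ∂P with hE
  have hE0 : ∀ ε n, 0 ≤ E ε n := fun ε n =>
    le_ciInf fun h => integral_nonneg fun ω => by positivity
  have hEsumm : ∀ ε : Fin d → ℤ, (∀ i, ε i = 1 ∨ ε i = -1) →
      Summable (fun n : ℕ => (n : ℝ) ^ (d - 1) * E ε n) := fun ε hε => hinterp ε hε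
  -- choose good predictors
  have hex : ∀ (ε : Fin d → ℤ) (n : ℕ), ∃ h : (Fin d → ℕ) → ℂ,
      ∫ ω, ‖X 0 ω - ∑ m ∈ box d n, h m * X (fun i => ε i * (m i : ℤ)) ω‖ ^ 2 ∂P
        < E ε n + (1/2 : ℝ) ^ n := by
    intro ε n
    apply exists_lt_of_ciInf_lt
    show E ε n < E ε n + (1/2 : ℝ) ^ n
    have : (0:ℝ) < (1/2 : ℝ)^n := by positivity
    linarith
  choose hco hco_spec using hex
  -- residual at a site
  set Z : (Fin d → ℤ) → Ω → ℂ := fun p ω =>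
    X p ω - ∑ m ∈ box d (rad p - 1),
      hco (sg p) (rad p - 1) m * X (fun i => p i + sg p i * (m i : ℤ)) ω with hZ
  -- bad sets on configuration space
  set Bd : (Fin d → ℤ) → Set ((Fin d → ℤ) → ℂ) := fun p =>
    {x | δ/3 ≤ ‖x p - ∑ m ∈ box d (rad p - 1),
      hco (sg p) (rad p - 1) m * x (fun i => p i + sg p i * (m i : ℤ))‖} with hBd
  have hBdm : ∀ p, MeasurableSet (Bd p) := by
    intro p
    have hg : Measurable fun x : (Fin d → ℤ) → ℂ =>
        ‖x p - ∑ m ∈ box d (rad p - 1),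
          hco (sg p) (rad p - 1) m * x (fun i => p i + sg p i * (m i : ℤ))‖ := by
      apply Measurable.norm
      exact (measurable_pi_apply p).sub
        (Finset.measurable_sum _ fun m _ => (measurable_pi_apply _).const_mul _)
    exact measurableSet_le measurable_const hg
  -- stationarity
  have station : ∀ (ε : Fin d → ℤ) (n : ℕ) (h : (Fin d → ℕ) → ℂ) (p : Fin d → ℤ),
      ∫ ω, ‖X p ω - ∑ m ∈ box d n, h m * X (fun i => p i + ε i * (m i : ℤ)) ω‖ ^ 2 ∂P
      = ∫ ω, ‖X 0 ω - ∑ m ∈ box d n, h m * X (fun i => ε i * (m i : ℤ)) ω‖ ^ 2 ∂P := by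
    intro ε n h p
    set g : ((Fin d → ℤ) → ℂ) → ℝ := fun x =>
      ‖x 0 - ∑ m ∈ box d n, h m * x (fun i => ε i * (m i : ℤ))‖ ^ 2 with hg
    have hgm : Measurable g := by
      apply Measurable.pow_const
      apply Measurable.norm
      exact (measurable_pi_apply 0).sub
        (Finset.measurable_sum _ fun m _ => (measurable_pi_apply _).const_mul _)
    have hΨ : Measurable (fun ω => (fun m => X (m + p) ω : (Fin d → ℤ) → ℂ)) :=
      (hSm p).comp hΦm
    have e1 : ∫ x, g x ∂(Measure.map (fun ω => (fun m => X (m + p) ω : (Fin d → ℤ) → ℂ)) P)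
        = ∫ ω, g (fun m => X (m + p) ω) ∂P :=
      integral_map hΨ.aemeasurable hgm.aestronglyMeasurable
    have e2 : ∫ x, g x ∂(Measure.map Φ P) = ∫ ω, g (Φ ω) ∂P :=
      integral_map hΦm.aemeasurable hgm.aestronglyMeasurable
    have hidx : ∀ m : Fin d → ℕ,
        ((fun i => ε i * (m i : ℤ)) + p) = (fun i => p i + ε i * (m i : ℤ)) := by
      intro m; funext i; simp [Pi.add_apply]; ring
    have e3 : ∀ ω, g (fun m => X (m + p) ω)
        = ‖X p ω - ∑ m ∈ box d n, h m * X (fun i => p i + ε i * (m i : ℤ)) ω‖ ^ 2 := by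
      intro ω
      rw [hg]
      show ‖X ((0 : Fin d → ℤ) + p) ω
          - ∑ m ∈ box d n, h m * X ((fun i => ε i * (m i : ℤ)) + p) ω‖ ^ 2 = _
      have hsum : (∑ m ∈ box d n, h m * X ((fun i => ε i * (m i : ℤ)) + p) ω)
          = ∑ m ∈ box d n, h m * X (fun i => p i + ε i * (m i : ℤ)) ω :=
        Finset.sum_congr rfl fun m _ => congrArg (fun q => h m * X q ω) (hidx m)
      rw [zero_add, hsum]
    calc ∫ ω, ‖X p ω - ∑ m ∈ box d n, h m * X (fun i => p i + ε i * (m i : ℤ)) ω‖ ^ 2 ∂P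
        = ∫ ω, g (fun m => X (m + p) ω) ∂P := by
          congr 1; funext ω; rw [e3]
    _ = ∫ x, g x ∂(Measure.map (fun ω => (fun m => X (m + p) ω : (Fin d → ℤ) → ℂ)) P) :=
        e1.symm
    _ = ∫ x, g x ∂(Measure.map Φ P) := by rw [hstat p, hμ]
    _ = ∫ ω, g (Φ ω) ∂P := e2
    _ = ∫ ω, ‖X 0 ω - ∑ m ∈ box d n, h m * X (fun i => ε i * (m i : ℤ)) ω‖ ^ 2 ∂P := rfl
  -- L² membership
  have hZL2 : ∀ p, MemLp (Z p) 2 P := fun p =>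
    (hL2 p).sub (memLp_finsetSum _ fun m _ => (hL2 _).const_mul _)
  have hZint : ∀ p, Integrable (fun ω => ‖Z p ω‖^2) P := by
    intro p
    have h := (hZL2 p).integrable_norm_rpow (by norm_num) (by norm_num)
    have h2 : ((2:ℝ≥0∞)).toReal = (2:ℝ) := by norm_num
    rw [h2] at h
    refine h.congr (ae_of_all _ fun ω => ?_)
    show ‖Z p ω‖ ^ (2:ℝ) = ‖Z p ω‖ ^ (2:ℕ)
    rw [← Real.rpow_natCast (‖Z p ω‖) 2]
    norm_num
  -- error bound at each site
  have hZbound : ∀ p : Fin d → ℤ,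
      ∫ ω, ‖Z p ω‖^2 ∂P < E (sg p) (rad p - 1) + (1/2:ℝ)^(rad p - 1) := by
    intro p
    rw [hZ]
    have := station (sg p) (rad p - 1) (hco (sg p) (rad p - 1)) p
    simp only [] at this ⊢
    rw [this]
    exact hco_spec _ _
  -- Chebyshev
  have hcheb : ∀ p : Fin d → ℤ, μ (Bd p) ≤
      ENNReal.ofReal ((3/δ)^2 * (E (sg p) (rad p - 1) + (1/2:ℝ)^(rad p - 1))) := by
    intro p
    have hmap : μ (Bd p) = P (Φ ⁻¹' (Bd p)) := Measure.map_apply hΦm (hBdm p)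
    have hsetid : Φ ⁻¹' (Bd p) = {ω | (δ/3)^2 ≤ ‖Z p ω‖^2} := by
      ext ω
      simp only [Set.mem_preimage, hBd, Set.mem_setOf_eq, hZ]
      constructor
      · intro hle
        exact pow_le_pow_left₀ (by positivity) hle 2
      · intro hle
        by_contra hlt
        push_neg at hlt
        have := pow_lt_pow_left₀ hlt (norm_nonneg _) (two_ne_zero)
        linarith
    have hmark := mul_meas_ge_le_integral_of_nonneg (μ := P)
      (f := fun ω => ‖Z p ω‖^2) (ae_of_all _ fun ω => by positivity) (hZint p) ((δ/3)^2)
    have hIR : ∫ ω, ‖Z p ω‖^2 ∂P ≤ E (sg p) (rad p - 1) + (1/2:ℝ)^(rad p - 1) :=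
      (hZbound p).le
    have h1 : (0:ℝ) < (δ/3)^2 := by positivity
    have h2 : (P {ω | (δ/3)^2 ≤ ‖Z p ω‖^2}).toReal
        ≤ (3/δ)^2 * (E (sg p) (rad p - 1) + (1/2:ℝ)^(rad p - 1)) := by
      rw [show (3/δ)^2 * (E (sg p) (rad p - 1) + (1/2:ℝ)^(rad p - 1))
          = (E (sg p) (rad p - 1) + (1/2:ℝ)^(rad p - 1)) / (δ/3)^2 by
        field_simp]
      rw [le_div_iff₀ h1]
      rw [measureReal_def] at hmark
      nlinarith [hmark, hIR]
    rw [hmap, hsetid]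
    calc P {ω | (δ/3)^2 ≤ ‖Z p ω‖^2}
        = ENNReal.ofReal (P {ω | (δ/3)^2 ≤ ‖Z p ω‖^2}).toReal :=
          (ENNReal.ofReal_toReal (measure_ne_top _ _)).symm
    _ ≤ ENNReal.ofReal ((3/δ)^2 * (E (sg p) (rad p - 1) + (1/2:ℝ)^(rad p - 1))) :=
          ENNReal.ofReal_le_ofReal h2
  -- sign vectors
  set sgns : Finset (Fin d → ℤ) := Fintype.piFinset fun _ : Fin d => ({1, -1} : Finset ℤ)
    with hsgns
  have hsgmem : ∀ p : Fin d → ℤ, sg p ∈ sgns := fun p => Fintype.mem_piFinset.mpr fun i => by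
    rcases sg_pm p i with h | h <;> simp [h]
  have hsgpm : ∀ ε ∈ sgns, ∀ i, ε i = 1 ∨ ε i = -1 := by
    intro ε hε i
    have := Fintype.mem_piFinset.mp hε i
    simpa using this
  set B : ℕ → ℝ := fun k => ∑ ε ∈ sgns, (E ε k + (1/2:ℝ)^k) with hB
  have hB0 : ∀ k, 0 ≤ B k := fun k => Finset.sum_nonneg fun ε _ =>
    add_nonneg (hE0 ε k) (by positivity)
  have hBbound : ∀ p : Fin d → ℤ, ∀ k,
      E (sg p) k + (1/2:ℝ)^k ≤ B k := fun p k =>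
    Finset.single_le_sum (f := fun ε => E ε k + (1/2:ℝ)^k)
      (fun ε _ => add_nonneg (hE0 ε k) (by positivity)) (hsgmem p)
  -- shells
  set Sh : ℕ → Set ((Fin d → ℤ) → ℂ) := fun n => ⋃ p ∈ sphere d n, Bd p with hSh
  have hShm : ∀ n, MeasurableSet (Sh n) := fun n =>
    (sphere d n).measurableSet_biUnion fun p _ => hBdm p
  set creal : ℕ → ℝ := fun n =>
    (2*(d:ℝ)*(3:ℝ)^(d-1)*(3/δ)^2) * ((n:ℝ)^(d-1) * B (n-1)) with hcreal
  have hShb : ∀ n : ℕ, 1 ≤ n → μ (Sh n) ≤ ENNReal.ofReal (creal n) := by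
    intro n hn
    have h2 : ∀ p ∈ sphere d n, μ (Bd p) ≤ ENNReal.ofReal ((3/δ)^2 * B (n-1)) := by
      intro p hp
      have hr : rad p = n := rad_of_mem_sphere hp
      refine (hcheb p).trans (ENNReal.ofReal_le_ofReal ?_)
      rw [hr]
      exact mul_le_mul_of_nonneg_left (hBbound p (n-1)) (by positivity)
    calc μ (Sh n) ≤ ∑ p ∈ sphere d n, μ (Bd p) := measure_biUnion_finset_le _ _
    _ ≤ ∑ _p ∈ sphere d n, ENNReal.ofReal ((3/δ)^2 * B (n-1)) := Finset.sum_le_sum h2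
    _ = ((sphere d n).card : ℝ≥0∞) * ENNReal.ofReal ((3/δ)^2 * B (n-1)) := by
        rw [Finset.sum_const, nsmul_eq_mul]
    _ ≤ ((2*d*(3*n)^(d-1) : ℕ) : ℝ≥0∞) * ENNReal.ofReal ((3/δ)^2 * B (n-1)) :=
        mul_le_mul_left (Nat.cast_le.mpr (card_sphere_le hd hn)) _
    _ = ENNReal.ofReal (((2*d*(3*n)^(d-1) : ℕ) : ℝ) * ((3/δ)^2 * B (n-1))) := by
        rw [ENNReal.ofReal_mul (Nat.cast_nonneg _), ENNReal.ofReal_natCast]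
    _ = ENNReal.ofReal (creal n) := by
        congr 1
        rw [hcreal]
        push_cast
        ring
  have hsumE' : ∀ ε ∈ sgns, Summable (fun n : ℕ => (n:ℝ)^(d-1) * E ε (n-1)) := by
    intro ε hε
    have hg := hEsumm ε (hsgpm ε hε)
    refine (summable_nat_add_iff 2).mp ?_
    have hg1 : Summable (fun k : ℕ => (((k+1 : ℕ)):ℝ)^(d-1) * E ε (k+1)) :=
      (summable_nat_add_iff (f := fun n : ℕ => (n:ℝ)^(d-1) * E ε n) 1).mpr hg
    apply Summable.of_nonneg_of_le
      (fun k => mul_nonneg (by positivity) (hE0 _ _)) _ (hg1.mul_left ((2:ℝ)^(d-1)))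
    intro k
    show (((k+2 : ℕ)):ℝ)^(d-1) * E ε (k+2-1)
        ≤ (2:ℝ)^(d-1) * ((((k+1 : ℕ)):ℝ)^(d-1) * E ε (k+1))
    have h1 : (((k+2 : ℕ)):ℝ)^(d-1) ≤ (2:ℝ)^(d-1) * (((k+1 : ℕ)):ℝ)^(d-1) := by
      rw [← mul_pow]
      apply pow_le_pow_left₀ (by positivity)
      push_cast
      linarith
    have h2 : k+2-1 = k+1 := rfl
    rw [h2, ← mul_assoc]
    exact mul_le_mul_of_nonneg_right h1 (hE0 _ _)
  have hgeo : Summable (fun n : ℕ => (n:ℝ)^(d-1) * (1/2:ℝ)^((n-1 : ℕ))) := by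
    have h := summable_pow_mul_geometric_of_norm_lt_one (R := ℝ) (d-1)
      (r := (1/2:ℝ)) (by rw [Real.norm_eq_abs, abs_of_pos (by norm_num : (0:ℝ) < 1/2)]; norm_num)
    apply Summable.of_nonneg_of_le (fun n => by positivity) _ (h.mul_left 2)
    intro n
    cases n with
    | zero =>
      show ((0:ℕ):ℝ)^(d-1) * (1/2:ℝ)^((0:ℕ)-1) ≤ 2 * (((0:ℕ):ℝ)^(d-1) * (1/2:ℝ)^(0:ℕ))
      have h0 : (0:ℝ) ≤ ((0:ℕ):ℝ)^(d-1) := by positivity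
      simp only [Nat.zero_sub, pow_zero, mul_one]
      nlinarith [h0]
    | succ k =>
      show (((k+1:ℕ)):ℝ)^(d-1) * (1/2:ℝ)^(k+1-1) ≤ 2 * ((((k+1:ℕ)):ℝ)^(d-1) * (1/2:ℝ)^(k+1))
      have h2 : k+1-1 = k := rfl
      rw [h2]
      have : (2:ℝ) * (1/2:ℝ)^(k+1) = (1/2:ℝ)^k := by
        rw [pow_succ]
        ring
      rw [show (2:ℝ) * ((((k+1:ℕ)):ℝ)^(d-1) * (1/2:ℝ)^(k+1))
          = (((k+1:ℕ)):ℝ)^(d-1) * ((2:ℝ) * (1/2:ℝ)^(k+1)) by ring, this]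
  have hBn : Summable (fun n : ℕ => (n:ℝ)^(d-1) * B (n-1)) := by
    have heq : (fun n : ℕ => (n:ℝ)^(d-1) * B (n-1))
        = fun n : ℕ => ∑ ε ∈ sgns, ((n:ℝ)^(d-1) * E ε ((n-1 : ℕ)) + (n:ℝ)^(d-1) * (1/2:ℝ)^((n-1 : ℕ))) := by
      funext n
      rw [hB, Finset.mul_sum]
      exact Finset.sum_congr rfl fun ε _ => by ring
    rw [heq]
    apply summable_sum
    intro ε hε
    exact (hsumE' ε hε).add hgeo
  have hcsumm : Summable creal := by
    rw [hcreal]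
    exact hBn.mul_left _
  have hsum : ∑' n : ℕ, μ (Sh (n+1)) ≠ ⊤ := by
    have hc : ∀ n : ℕ, μ (Sh (n+1)) ≤ ENNReal.ofReal (creal (n+1)) :=
      fun n => hShb (n+1) (by omega)
    have hs : Summable (fun n => creal (n+1)) := by
      rw [summable_nat_add_iff 1]; exact hcsumm
    have hnn : ∀ n : ℕ, 0 ≤ creal (n+1) := fun n => by
      rw [hcreal]
      have := hB0 (n+1-1)
      positivity
    have hle : ∑' n : ℕ, μ (Sh (n+1)) ≤ ENNReal.ofReal (∑' n, creal (n+1)) := by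
      calc ∑' n : ℕ, μ (Sh (n+1)) ≤ ∑' n : ℕ, ENNReal.ofReal (creal (n+1)) :=
        ENNReal.tsum_le_tsum hc
      _ = ENNReal.ofReal (∑' n, creal (n+1)) := (ENNReal.ofReal_tsum_of_nonneg hnn hs).symm
    exact ne_top_of_le_ne_top ENNReal.ofReal_ne_top hle
  -- Borel–Cantelli
  have hlim : μ (limsup (fun n => Sh (n+1)) atTop) = 0 := measure_limsup_atTop_eq_zero hsum
  -- the deterministic set
  set D : Set ((Fin d → ℤ) → ℂ) :=
    {x | (∀ q, x q ∈ U) ∧ ∃ M : ℕ, ∀ p, M < rad p → x ∉ Bd p} with hD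
  have hUc : U.Countable := by
    apply Set.PairwiseDisjoint.countable_of_isOpen (s := fun z => Metric.ball z (δ/3))
    · intro z hz z' hz' hne
      have hdist : δ ≤ dist z z' := by
        rw [dist_eq_norm]; exact hsep z hz z' hz' hne
      exact Metric.ball_disjoint_ball (by linarith)
    · exact fun z _ => Metric.isOpen_ball
    · exact fun z _ => Metric.nonempty_ball.mpr (by positivity)
  have hDc : D.Countable := by
    haveI : Countable U := hUc.to_subtype
    have hDM : ∀ M : ℕ,
        Set.Countable {x : (Fin d → ℤ) → ℂ | (∀ q, x q ∈ U) ∧ ∀ p, M < rad p → x ∉ Bd p} := by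
      intro M
      set DM : Set ((Fin d → ℤ) → ℂ) :=
        {x | (∀ q, x q ∈ U) ∧ ∀ p, M < rad p → x ∉ Bd p} with hDMdef
      haveI : Finite {q : Fin d → ℤ // rad q ≤ M} := by
        have hfin : Set.Finite {q : Fin d → ℤ | rad q ≤ M} := by
          apply Set.Finite.subset (Finset.finite_toSet
            (Fintype.piFinset fun _ : Fin d => Finset.Icc (-(M:ℤ)) M))
          intro q hq
          simp only [Set.mem_setOf_eq] at hq
          simp only [Finset.mem_coe, Fintype.mem_piFinset, Finset.mem_Icc]
          intro i
          have := natAbs_le_rad q i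
          omega
        exact hfin
      rw [← Set.countable_coe_iff]
      have hinj : Function.Injective (fun x : DM =>
          (fun q : {q : Fin d → ℤ // rad q ≤ M} => (⟨x.1 q.1, x.2.1 q.1⟩ : U))) := by
        intro x y hxy
        apply Subtype.ext
        apply rigidity hδ0 hsep (fun p => hco (sg p) (rad p - 1)) M x.1 y.1 x.2.1 y.2.1
        · intro p hp
          have hB' := x.2.2 p hp
          simp only [hBd, Set.mem_setOf_eq, not_le] at hB'
          exact hB'
        · intro p hp
          have hB' := y.2.2 p hp
          simp only [hBd, Set.mem_setOf_eq, not_le] at hB'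
          exact hB'
        · intro q hq
          have := congrFun hxy ⟨q, hq⟩
          simpa [Subtype.ext_iff] using this
      exact hinj.countable
    have hsub : D ⊆ ⋃ M : ℕ,
        {x : (Fin d → ℤ) → ℂ | (∀ q, x q ∈ U) ∧ ∀ p, M < rad p → x ∉ Bd p} := by
      rintro x ⟨h1, M, h2⟩
      exact Set.mem_iUnion.mpr ⟨M, h1, h2⟩
    exact (Set.countable_iUnion hDM).mono hsub
  have hDm : MeasurableSet D := hDc.measurableSet
  have hDfull : P (Φ ⁻¹' D) = 1 := by
    have hms : MeasurableSet (limsup (fun n => Sh (n+1)) atTop) :=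
      MeasurableSet.measurableSet_limsup fun n => hShm (n+1)
    have h0 : P (Φ ⁻¹' (limsup (fun n => Sh (n+1)) atTop)) = 0 := by
      rw [← Measure.map_apply hΦm hms, ← hμ]
      exact hlim
    have hae2 : ∀ᵐ ω ∂P, Φ ω ∉ limsup (fun n => Sh (n+1)) atTop := by
      rw [ae_iff]
      have hsetid : {ω | ¬ Φ ω ∉ limsup (fun n => Sh (n+1)) atTop}
          = Φ ⁻¹' (limsup (fun n => Sh (n+1)) atTop) := by
        ext ω; simp
      rw [hsetid]
      exact h0
    have hDae : ∀ᵐ ω ∂P, Φ ω ∈ D := by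
      filter_upwards [hval, hae2] with ω h1 h2
      refine ⟨fun q => h1 q, ?_⟩
      rw [limsup_eq_iInf_iSup_of_nat] at h2
      simp only [Set.iInf_eq_iInter, Set.iSup_eq_iUnion, Set.mem_iInter, Set.mem_iUnion,
        not_forall, not_exists] at h2
      obtain ⟨N, hN⟩ := h2
      refine ⟨N + 1, fun p hp hmem => ?_⟩
      have h4 : Φ ω ∈ Sh (rad p) := by
        rw [hSh]
        exact Set.mem_biUnion (by exact_mod_cast mem_sphere_of_rad) hmem
      obtain ⟨k, hk⟩ : ∃ k, rad p = k + 1 := ⟨rad p - 1, by omega⟩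
      rw [hk] at h4
      exact hN k (by omega) h4
    have hcmpl : P ((Φ ⁻¹' D)ᶜ) = 0 := by
      have := ae_iff.mp hDae
      convert this using 2
      rfl
    exact (prob_compl_eq_zero_iff (hΦm hDm)).mp hcmpl
  -- remove null atoms
  set D0 : Set ((Fin d → ℤ) → ℂ) := {x | x ∈ D ∧ μ {x} = 0} with hD0def
  have hD0c : D0.Countable := hDc.mono fun x hx => hx.1
  have hD0 : μ D0 = 0 := by
    rw [show D0 = ⋃ x ∈ D0, {x} by simp [Set.biUnion_of_singleton]]
    rw [measure_biUnion_null_iff hD0c]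
    exact fun x hx => hx.2
  set D' : Set ((Fin d → ℤ) → ℂ) := D \ D0 with hD'def
  have hD'm : MeasurableSet D' := (hDc.mono Set.diff_subset).measurableSet
  have hD'full : P (Φ ⁻¹' D') = 1 := by
    have h1 : P (Φ ⁻¹' D') = μ D' := (Measure.map_apply hΦm hD'm).symm
    have h2 : μ D' = μ D := measure_diff_null hD0
    have h3 : μ D = P (Φ ⁻¹' D) := Measure.map_apply hΦm hDm
    rw [h1, h2, h3]; exact hDfull
  -- conclusion
  have hconc : ∀ ω, Φ ω ∈ D' →
      ∃ N : Fin d → ℤ, (∀ i, 0 < N i) ∧ ∀ m, X (m + N) ω = X m ω := by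
    intro ω hω
    have hx : μ {Φ ω} ≠ 0 := fun h0 => hω.2 ⟨hω.1, h0⟩
    obtain ⟨N, hN, hper⟩ := atom_periodic μ hSP (Φ ω) hx
    exact ⟨N, hN, fun m => hper m⟩
  rw [ae_iff]
  have hsub : {ω | ¬∃ N : Fin d → ℤ, (∀ i, 0 < N i) ∧ ∀ m, X (m + N) ω = X m ω}
      ⊆ (Φ ⁻¹' D')ᶜ := by
    intro ω hω
    exact fun hmem => hω (hconc ω hmem)
  refine le_antisymm ?_ zero_le
  calc P _ ≤ P ((Φ ⁻¹' D')ᶜ) := measure_mono hsub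
  _ = 0 := by
      rw [measure_compl (hΦm hD'm) (measure_ne_top _ _), hD'full, measure_univ]
      simp
end
end

section
/- Let ψ : ℂ → ℂ be an entire function, not identically zero, and suppose there are constants C > 0, N ∈ ℕ and R ≥ 0 such that |ψ(z)| ≤ C·(1+|z|)^N·exp(R·|z|) for all z ∈ ℂ. For T > 0 let n_T(ψ) denote the (finite) number of zeros of ψ in the closed disc {z ∈ ℂ : |z| ≤ T}, counted without multiplicity. Then liminf_{T→∞} n_T(ψ)/T ≤ R. -/
open Filter

noncomputable section

set_option maxHeartbeats 1000000

open Metric Topology Finset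

-- dslope of entire is entire
private lemma entire_dslope {f : ℂ → ℂ} (hf : Differentiable ℂ f) (a : ℂ) :
    Differentiable ℂ (dslope f a) := by
  intro b
  rcases eq_or_ne b a with rfl | h
  · obtain ⟨p, hp⟩ := hf.analyticAt b
    exact (hp.has_fpower_series_dslope_fslope).analyticAt.differentiableAt
  · exact (differentiableAt_dslope_of_ne h).2 (hf b)

-- zeros finite
private lemma zeros_finite {ψ : ℂ → ℂ} (hψ : Differentiable ℂ ψ) (hne : ¬ ∀ z, ψ z = 0) (T : ℝ) :
    {z : ℂ | ‖z‖ ≤ T ∧ ψ z = 0}.Finite := by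
  by_contra h
  have hinf : {z : ℂ | ‖z‖ ≤ T ∧ ψ z = 0}.Infinite := h
  obtain ⟨x, -, hx⟩ := hinf.exists_accPt_of_subset_isCompact (isCompact_closedBall (0:ℂ) T)
    (fun z hz => by simpa [Metric.mem_closedBall, dist_zero_right] using hz.1)
  have hfreq : ∃ᶠ z in 𝓝[≠] x, ψ z = 0 := by
    have := accPt_iff_frequently.1 hx
    rw [frequently_nhdsWithin_iff]
    exact this.mono (fun z hz => ⟨hz.2.2, hz.1⟩)
  have : Set.EqOn ψ 0 Set.univ :=
    AnalyticOnNhd.eqOn_zero_of_preconnected_of_frequently_eq_zero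
      (fun z _ => hψ.analyticAt z) isPreconnected_univ (Set.mem_univ x) hfreq
  exact hne (fun z => this (Set.mem_univ z))

private lemma sphere_factor {S : ℝ} (hS : 0 < S) {z a : ℂ} (hz : ‖z‖ = S) :
    ‖(S:ℂ)^2 - (starRingEnd ℂ) a * z‖ = S * ‖z - a‖ := by
  have h1 : ((S:ℂ))^2 - (starRingEnd ℂ) a * z = (starRingEnd ℂ) (z - a) * z := by
    have : ((S:ℂ))^2 = (starRingEnd ℂ) z * z := by
      rw [← Complex.normSq_eq_conj_mul_self]
      rw [← Complex.sq_norm]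
      push_cast
      rw [hz]
    rw [this, map_sub]; ring
  rw [h1, norm_mul, RCLike.norm_conj, hz, mul_comm]

private lemma jensen_key {S M : ℝ} (hS : 0 < S) (hM : 0 ≤ M) (z₀ : ℂ) (hz₀ : ‖z₀‖ < S) :
    ∀ (F : Finset ℂ) (f : ℂ → ℂ), Differentiable ℂ f →
      (∀ z : ℂ, ‖z‖ = S → ‖f z‖ ≤ M) →
      (∀ a ∈ F, f a = 0 ∧ ‖a‖ < S) →
      ‖f z₀‖ ≤ M * ∏ a ∈ F, (S * ‖z₀ - a‖ / ‖(S:ℂ)^2 - (starRingEnd ℂ) a * z₀‖) := by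
  intro F
  induction F using Finset.induction_on with
  | empty =>
      intro f hf hb _
      simp only [Finset.prod_empty, mul_one]
      refine Complex.norm_le_of_forall_mem_frontier_norm_le (isBounded_ball (x := (0:ℂ)) (r := S))
        hf.diffContOnCl (fun z hzf => ?_) ?_
      · rw [frontier_ball (0:ℂ) hS.ne'] at hzf
        exact hb z (by simpa [mem_sphere_zero_iff_norm] using hzf)
      · exact subset_closure (mem_ball_zero_iff.2 hz₀)
  | @insert a F' ha ih =>
      intro f hf hb hzero
      obtain ⟨hfa, haS⟩ := hzero a (Finset.mem_insert_self a F')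
      set g : ℂ → ℂ := fun z => dslope f a z * (((S:ℂ))^2 - (starRingEnd ℂ) a * z) / S with hgdef
      have hg : Differentiable ℂ g := by
        apply Differentiable.div_const
        exact (entire_dslope hf a).mul (by fun_prop)
      have hgb : ∀ z : ℂ, ‖z‖ = S → ‖g z‖ ≤ M := by
        intro z hz
        have hza : z ≠ a := fun h => haS.ne (h ▸ hz)
        have hdn : ‖dslope f a z‖ = ‖f z‖ / ‖z - a‖ := by
          rw [dslope_of_ne f hza, slope_def_field, hfa, sub_zero, div_eq_mul_inv, mul_comm,
            norm_mul, norm_inv, div_eq_mul_inv, mul_comm]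
        have hne : ‖z - a‖ ≠ 0 := norm_ne_zero_iff.mpr (sub_ne_zero.mpr hza)
        calc ‖g z‖ = ‖f z‖ / ‖z - a‖ * (S * ‖z - a‖) / S := by
              rw [hgdef]; simp only [norm_div, norm_mul]
              rw [hdn, sphere_factor hS hz, Complex.norm_real, Real.norm_of_nonneg hS.le]
          _ = ‖f z‖ * (‖z - a‖ / ‖z - a‖) * (S / S) := by ring
          _ = ‖f z‖ := by rw [div_self hne, div_self hS.ne', mul_one, mul_one]
          _ ≤ M := hb z hz
      have hgz : ∀ b ∈ F', g b = 0 ∧ ‖b‖ < S := by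
        intro b hbF
        obtain ⟨hfb, hbS⟩ := hzero b (Finset.mem_insert_of_mem hbF)
        refine ⟨?_, hbS⟩
        have hba : b ≠ a := fun h => ha (h ▸ hbF)
        rw [hgdef]
        simp only
        rw [dslope_of_ne f hba, slope_def_field, hfa, hfb, sub_zero]
        simp
      have IH := ih g hg hgb hgz
      rw [Finset.prod_insert ha]
      rcases eq_or_ne z₀ a with rfl | hz₀a
      · rw [hfa, norm_zero]
        have : ∀ b ∈ F', (0:ℝ) ≤ S * ‖z₀ - b‖ / ‖(S:ℂ)^2 - (starRingEnd ℂ) b * z₀‖ := by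
          intro b _; positivity
        have h2 : (0:ℝ) ≤ ∏ b ∈ F', (S * ‖z₀ - b‖ / ‖(S:ℂ)^2 - (starRingEnd ℂ) b * z₀‖) :=
          Finset.prod_nonneg this
        positivity
      · -- compute ‖g z₀‖
        have hdenpos : 0 < ‖(S:ℂ)^2 - (starRingEnd ℂ) a * z₀‖ := by
          have : ‖(starRingEnd ℂ) a * z₀‖ < ‖((S:ℂ))^2‖ := by
            rw [norm_mul, RCLike.norm_conj, norm_pow, Complex.norm_real,
              Real.norm_of_nonneg hS.le]
            calc ‖a‖ * ‖z₀‖ ≤ S * ‖z₀‖ := by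
                  apply mul_le_mul_of_nonneg_right haS.le (norm_nonneg _)
              _ < S * S := by apply mul_lt_mul_of_pos_left hz₀ hS
              _ = S^2 := (sq S).symm
          calc (0:ℝ) < ‖((S:ℂ))^2‖ - ‖(starRingEnd ℂ) a * z₀‖ := by linarith
            _ ≤ _ := norm_sub_norm_le _ _
        have hgz₀ : ‖g z₀‖ = ‖f z₀‖ / ‖z₀ - a‖ * ‖(S:ℂ)^2 - (starRingEnd ℂ) a * z₀‖ / S := by
          rw [hgdef]
          simp only [norm_div, norm_mul]
          rw [dslope_of_ne f hz₀a, slope_def_field, hfa, sub_zero, Complex.norm_real,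
            Real.norm_of_nonneg hS.le, norm_div]
        have hsubpos : 0 < ‖z₀ - a‖ := by
          simpa [norm_pos_iff] using sub_ne_zero.mpr hz₀a
        have : ‖f z₀‖ = ‖g z₀‖ * (S * ‖z₀ - a‖ / ‖(S:ℂ)^2 - (starRingEnd ℂ) a * z₀‖) := by
          rw [hgz₀]
          have h2 : ‖f z₀‖ / ‖z₀ - a‖ * ‖(S:ℂ)^2 - (starRingEnd ℂ) a * z₀‖ / S *
              (S * ‖z₀ - a‖ / ‖(S:ℂ)^2 - (starRingEnd ℂ) a * z₀‖)
              = ‖f z₀‖ * (‖z₀ - a‖ / ‖z₀ - a‖) * (S / S) *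
                (‖(S:ℂ)^2 - (starRingEnd ℂ) a * z₀‖ / ‖(S:ℂ)^2 - (starRingEnd ℂ) a * z₀‖) := by
            ring
          rw [h2, div_self hsubpos.ne', div_self hS.ne', div_self hdenpos.ne']
          ring
        rw [this]
        calc ‖g z₀‖ * (S * ‖z₀ - a‖ / ‖(S:ℂ)^2 - (starRingEnd ℂ) a * z₀‖)
            ≤ (M * ∏ b ∈ F', (S * ‖z₀ - b‖ / ‖(S:ℂ)^2 - (starRingEnd ℂ) b * z₀‖)) *
              (S * ‖z₀ - a‖ / ‖(S:ℂ)^2 - (starRingEnd ℂ) a * z₀‖) := by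
              apply mul_le_mul_of_nonneg_right IH
              positivity
          _ = M * ((S * ‖z₀ - a‖ / ‖(S:ℂ)^2 - (starRingEnd ℂ) a * z₀‖) *
              ∏ b ∈ F', (S * ‖z₀ - b‖ / ‖(S:ℂ)^2 - (starRingEnd ℂ) b * z₀‖)) := by ring

private lemma count_bound {ψ : ℂ → ℂ} (hψ : Differentiable ℂ ψ) (hne : ¬ ∀ z, ψ z = 0)
    {S q M : ℝ} (hq : 1 < q) (hM : 0 ≤ M) {z₀ : ℂ} (hz₀S : ‖z₀‖ < S)
    (hb : ∀ z : ℂ, ‖z‖ = S → ‖ψ z‖ ≤ M) (m : ℕ) :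
    ‖ψ z₀‖ * q ^ (∑ j ∈ Finset.Icc 1 m,
        Set.ncard {z : ℂ | ‖z‖ ≤ (S - ‖z₀‖) * q⁻¹ ^ j - ‖z₀‖ ∧ ψ z = 0}) ≤ M := by
  classical
  set ρ := ‖z₀‖ with hρ
  set r : ℕ → ℝ := fun j => (S - ρ) * q⁻¹ ^ j - ρ with hr
  have hρ0 : 0 ≤ ρ := norm_nonneg z₀
  have hS : 0 < S := lt_of_le_of_lt hρ0 hz₀S
  have hSρ : 0 < S - ρ := sub_pos.mpr hz₀S
  have hq0 : 0 < q := lt_trans one_pos hq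
  have hqi1 : q⁻¹ < 1 := inv_lt_one_of_one_lt₀ hq
  have hqi0 : 0 < q⁻¹ := inv_pos.mpr hq0
  have hrmono : ∀ {i j : ℕ}, i ≤ j → r j ≤ r i := by
    intro i j hij
    have := pow_le_pow_of_le_one hqi0.le hqi1.le hij
    simp only [hr]
    nlinarith
  have hrstrict : ∀ {i j : ℕ}, i < j → r j < r i := by
    intro i j hij
    have := pow_lt_pow_right_of_lt_one₀ hqi0 hqi1 hij
    simp only [hr]
    nlinarith
  have hr0S : r 0 ≤ S := by simp only [hr]; simp; nlinarith
  have hr1S : r 1 < S := lt_of_lt_of_le (hrstrict one_pos) hr0S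
  set F : Finset ℂ := (zeros_finite hψ hne (r 1)).toFinset with hF
  have hFmem : ∀ a, a ∈ F ↔ (‖a‖ ≤ r 1 ∧ ψ a = 0) := by
    intro a; rw [hF, Set.Finite.mem_toFinset]; rfl
  have hFz : ∀ a ∈ F, ψ a = 0 ∧ ‖a‖ < S := by
    intro a haF
    exact ⟨((hFmem a).1 haF).2, lt_of_le_of_lt ((hFmem a).1 haF).1 hr1S⟩
  have key := jensen_key hS hM z₀ hz₀S F ψ hψ hb hFz
  set J : ℂ → ℕ := fun a => ((Finset.Icc 1 m).filter (fun j => ‖a‖ ≤ r j)).card with hJ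
  -- per-zero bound
  have hper : ∀ a ∈ F, S * ‖z₀ - a‖ / ‖(S:ℂ)^2 - (starRingEnd ℂ) a * z₀‖ ≤ q⁻¹ ^ (J a) := by
    intro a haF
    obtain ⟨har1, hψa⟩ := (hFmem a).1 haF
    have haS : ‖a‖ ≤ S := le_of_lt (lt_of_le_of_lt har1 hr1S)
    have hJr : ‖a‖ ≤ r (J a) := by
      by_cases hJ0 : J a = 0
      · rw [hJ0]; exact le_trans har1 (hrmono (Nat.zero_le 1))
      · by_contra hlt
        push_neg at hlt
        have hsub : (Finset.Icc 1 m).filter (fun j => ‖a‖ ≤ r j) ⊆ Finset.Ico 1 (J a) := by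
          intro j hj
          rw [Finset.mem_filter, Finset.mem_Icc] at hj
          rw [Finset.mem_Ico]
          refine ⟨hj.1.1, ?_⟩
          by_contra hge
          push_neg at hge
          exact absurd (le_trans hj.2 (hrmono hge)) (not_le.mpr hlt)
        have hcard := Finset.card_le_card hsub
        rw [Nat.card_Ico] at hcard
        have hJa : J a = ((Finset.Icc 1 m).filter (fun j => ‖a‖ ≤ r j)).card := rfl
        omega
    have hnum : ‖z₀ - a‖ ≤ ρ + ‖a‖ := norm_sub_le z₀ a
    have hden : S * (S - ρ) ≤ ‖(S:ℂ)^2 - (starRingEnd ℂ) a * z₀‖ := by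
      have h1 : ‖(starRingEnd ℂ) a * z₀‖ = ‖a‖ * ρ := by
        rw [norm_mul, RCLike.norm_conj]
      have h2 : ‖((S:ℂ))^2‖ = S^2 := by
        rw [norm_pow, Complex.norm_real, Real.norm_of_nonneg hS.le]
      calc S * (S - ρ) ≤ S^2 - ‖a‖ * ρ := by nlinarith
        _ = ‖((S:ℂ))^2‖ - ‖(starRingEnd ℂ) a * z₀‖ := by rw [h1, h2]
        _ ≤ _ := norm_sub_norm_le _ _
    have hdenpos : 0 < S * (S - ρ) := mul_pos hS hSρ
    calc S * ‖z₀ - a‖ / ‖(S:ℂ)^2 - (starRingEnd ℂ) a * z₀‖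
        ≤ S * (ρ + ‖a‖) / (S * (S - ρ)) := by
          apply div_le_div₀ (by positivity) _ hdenpos hden
          exact mul_le_mul_of_nonneg_left hnum hS.le
      _ = (ρ + ‖a‖) / (S - ρ) := mul_div_mul_left _ _ hS.ne'
      _ ≤ ((S - ρ) * q⁻¹ ^ (J a)) / (S - ρ) := by
          have h3 : ρ + ‖a‖ ≤ (S - ρ) * q⁻¹ ^ (J a) := by
            simp only [hr] at hJr; linarith
          exact div_le_div₀ (by positivity) h3 hSρ le_rfl
      _ = q⁻¹ ^ (J a) := mul_div_cancel_left₀ _ hSρ.ne'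
  -- product bound
  have hprod : (∏ a ∈ F, (S * ‖z₀ - a‖ / ‖(S:ℂ)^2 - (starRingEnd ℂ) a * z₀‖))
      ≤ q⁻¹ ^ (∑ a ∈ F, J a) := by
    rw [← Finset.prod_pow_eq_pow_sum]
    exact Finset.prod_le_prod (fun a _ => by positivity) hper
  -- double counting
  have hcount : (∑ a ∈ F, J a)
      = ∑ j ∈ Finset.Icc 1 m, Set.ncard {z : ℂ | ‖z‖ ≤ r j ∧ ψ z = 0} := by
    have h1 : ∀ j ∈ Finset.Icc 1 m,
        Set.ncard {z : ℂ | ‖z‖ ≤ r j ∧ ψ z = 0} = (F.filter (fun a => ‖a‖ ≤ r j)).card := by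
      intro j hj
      rw [Finset.mem_Icc] at hj
      have hrj : r j ≤ r 1 := hrmono hj.1
      rw [Set.ncard_eq_toFinset_card _ (zeros_finite hψ hne (r j))]
      congr 1
      apply Finset.ext
      intro z
      simp only [Set.Finite.mem_toFinset, Set.mem_setOf_eq, Finset.mem_filter, hFmem]
      exact ⟨fun h => ⟨⟨h.1.trans hrj, h.2⟩, h.1⟩, fun h => ⟨h.2, h.1.2⟩⟩
    have h2 : ∑ a ∈ F, J a = ∑ j ∈ Finset.Icc 1 m, (F.filter (fun a => ‖a‖ ≤ r j)).card := by
      simp only [hJ, Finset.card_filter]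
      rw [Finset.sum_comm]
    rw [h2]
    exact (Finset.sum_congr rfl h1).symm
  rw [hcount] at hprod
  set K := ∑ j ∈ Finset.Icc 1 m, Set.ncard {z : ℂ | ‖z‖ ≤ r j ∧ ψ z = 0} with hK
  have hfin : ‖ψ z₀‖ ≤ M * q⁻¹ ^ K :=
    le_trans key (mul_le_mul_of_nonneg_left hprod hM)
  calc ‖ψ z₀‖ * q ^ K ≤ (M * q⁻¹ ^ K) * q ^ K :=
        mul_le_mul_of_nonneg_right hfin (pow_nonneg hq0.le K)
    _ = M := by
        rw [mul_assoc, ← mul_pow, inv_mul_cancel₀ hq0.ne', one_pow, mul_one]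

-- geometric sum lemma
private lemma geom_Icc {q : ℝ} (hq : q ≠ 1) (m : ℕ) :
    ∑ j ∈ Finset.Icc 1 m, q ^ (m + 1 - j) = (q ^ (m+1) - q) / (q - 1) := by
  induction m with
  | zero => simp
  | succ m ih =>
      rw [Finset.sum_Icc_succ_top (by omega : 1 ≤ m + 1)]
      have hstep : ∀ j ∈ Finset.Icc 1 m, q ^ (m + 1 + 1 - j) = q * q ^ (m + 1 - j) := by
        intro j hj
        rw [Finset.mem_Icc] at hj
        have : m + 1 + 1 - j = (m + 1 - j) + 1 := by omega
        rw [this, pow_succ, mul_comm]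
      rw [Finset.sum_congr rfl hstep, ← Finset.mul_sum, ih]
      have hq1 : q - 1 ≠ 0 := sub_ne_zero.mpr hq
      simp only [show m + 1 + 1 - (m + 1) = 1 by omega, pow_one]
      field_simp
      ring
-- log x ≤ 2 sqrt x
private lemma log_le_two_sqrt {x : ℝ} (hx : 0 < x) : Real.log x ≤ 2 * Real.sqrt x := by
  have h1 : Real.log (Real.sqrt x) = Real.log x / 2 := Real.log_sqrt hx.le
  have h2 : Real.log (Real.sqrt x) ≤ Real.sqrt x - 1 :=
    Real.log_le_sub_one_of_pos (Real.sqrt_pos.mpr hx)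
  linarith

private lemma one_sub_inv_le_log {x : ℝ} (hx : 0 < x) : 1 - x⁻¹ ≤ Real.log x := by
  have := Real.log_le_sub_one_of_pos (inv_pos.mpr hx)
  rw [Real.log_inv] at this
  linarith

/-- Jensen's identity consequence (Lemma 3): a nonzero entire function of exponential type
`R` (i.e. `|ψ(z)| ≤ C(1+|z|)^N e^{R|z|}`) has zero-counting function `n_T(ψ)` (zeros in the
closed disc of radius `T`, counted without multiplicity) satisfying
`liminf_{T→∞} n_T(ψ)/T ≤ R`. -/
theorem jensen_zero_density (ψ : ℂ → ℂ) (hψ : Differentiable ℂ ψ)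
    (hne : ¬ ∀ z, ψ z = 0)
    (C : ℝ) (hC : 0 < C) (N : ℕ) (R : ℝ) (hR : 0 ≤ R)
    (hbound : ∀ z : ℂ, ‖ψ z‖ ≤ C * (1 + ‖z‖) ^ N * Real.exp (R * ‖z‖)) :
    Filter.liminf
        (fun T : ℝ => (Set.ncard {z : ℂ | ‖z‖ ≤ T ∧ ψ z = 0} : ℝ) / T)
        Filter.atTop
      ≤ R := by
  classical
  by_contra hcon
  push_neg at hcon
  set u : ℝ → ℝ := fun T => ((Set.ncard {z : ℂ | ‖z‖ ≤ T ∧ ψ z = 0} : ℝ)) / T with hu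
  obtain ⟨z₀, hz₀⟩ := not_forall.mp hne
  set ρ := ‖z₀‖ with hρdef
  have hρ0 : 0 ≤ ρ := norm_nonneg z₀
  have hψz₀ : 0 < ‖ψ z₀‖ := norm_pos_iff.mpr hz₀
  have hbdd : IsBoundedUnder (· ≥ ·) atTop u := by
    apply isBoundedUnder_of_eventually_ge (a := (0:ℝ))
    filter_upwards [eventually_ge_atTop (0:ℝ)] with T hT
    exact div_nonneg (Nat.cast_nonneg _) hT
  set b := (R + liminf u atTop)/2 with hbdef
  have hRb : R < b := by rw [hbdef]; linarith
  have hblim : b < liminf u atTop := by rw [hbdef]; linarith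
  have hb0 : 0 < b := lt_of_le_of_lt hR hRb
  have hev : ∀ᶠ T in atTop, b < u T := eventually_lt_of_lt_liminf hblim hbdd
  obtain ⟨T₁, hT₁⟩ := eventually_atTop.1 hev
  set T₀ := max T₁ 1 with hT₀def
  have hT₀1 : (1:ℝ) ≤ T₀ := le_max_right _ _
  have hnlb : ∀ T : ℝ, T₀ ≤ T → b * T ≤ (Set.ncard {z : ℂ | ‖z‖ ≤ T ∧ ψ z = 0} : ℝ) := by
    intro T hT
    have hTpos : (0:ℝ) < T := lt_of_lt_of_le one_pos (le_trans hT₀1 hT)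
    have h1 := hT₁ T (le_trans (le_max_left _ _) hT)
    rw [hu] at h1
    have := (lt_div_iff₀ hTpos).mp h1
    linarith
  set b' := (R + b)/2 with hb'def
  have hb'0 : 0 < b' := by rw [hb'def]; linarith
  have hb'b : b' < b := by rw [hb'def]; linarith
  have hRb' : R < b' := by rw [hb'def]; linarith
  set q := b / b' with hqdef
  have hq1 : 1 < q := (one_lt_div hb'0).mpr hb'b
  have hq0 : 0 < q := lt_trans one_pos hq1
  have hlogq : 0 < Real.log q := Real.log_pos hq1
  have hbq : b / q = b' := by rw [hqdef]; field_simp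
  -- constants
  set A := (b - R)/2 with hAdef
  have hA0 : 0 < A := by rw [hAdef]; linarith
  have hb'RA : b' - R = A := by rw [hb'def, hAdef]; ring
  set B₀ := Real.log C - Real.log ‖ψ z₀‖ + b' * ρ + b * (T₀ + ρ) + 2 * N with hB₀def
  set c := b * ρ * (q - 1) * 2 / Real.log q + 2 * N with hcdef
  have hc0 : 0 ≤ c := by
    rw [hcdef]
    have h1 : 0 ≤ b * ρ * (q - 1) * 2 / Real.log q :=
      div_nonneg (mul_nonneg (mul_nonneg (mul_nonneg hb0.le hρ0) (by linarith)) (by norm_num))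
        hlogq.le
    positivity
  clear_value u b T₀ b' q A B₀ c
  -- main per-m inequality
  have hmain : ∀ m : ℕ, A * (q^(m+1) * (T₀ + ρ) + ρ)
      ≤ B₀ + c * Real.sqrt (q^(m+1) * (T₀ + ρ) + ρ) := by
    intro m
    set Sv := q^(m+1) * (T₀ + ρ) + ρ with hSvdef
    have hT₀ρ1 : (1:ℝ) ≤ T₀ + ρ := by linarith
    have hqm1 : (1:ℝ) ≤ q^(m+1) := by
      calc (1:ℝ) = q^0 := (pow_zero q).symm
        _ ≤ q^(m+1) := pow_le_pow_right₀ hq1.le (Nat.zero_le _)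
    have hprod1 : (1:ℝ) ≤ q^(m+1) * (T₀ + ρ) := by
      have h := mul_le_mul hqm1 hT₀ρ1 zero_le_one (le_trans zero_le_one hqm1)
      linarith
    have hρSv : ρ < Sv := by
      rw [hSvdef]; linarith
    have hSv0 : 0 < Sv := lt_of_le_of_lt hρ0 hρSv
    have hSv1 : 1 ≤ Sv := by rw [hSvdef]; linarith
    clear_value Sv
    set Mv := C * (1 + Sv)^N * Real.exp (R * Sv) with hMvdef
    have hMv0 : 0 ≤ Mv := by positivity
    have hbnd : ∀ z : ℂ, ‖z‖ = Sv → ‖ψ z‖ ≤ Mv := by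
      intro z hz
      have := hbound z
      rw [hz] at this
      exact this
    have hcb := count_bound hψ hne hq1 hMv0 hρSv hbnd m
    clear_value Mv
    set K := ∑ j ∈ Finset.Icc 1 m,
        Set.ncard {z : ℂ | ‖z‖ ≤ (Sv - ρ) * q⁻¹ ^ j - ρ ∧ ψ z = 0} with hKdef
    clear_value K
    -- take logs
    have hlog : Real.log ‖ψ z₀‖ + (K:ℝ) * Real.log q
        ≤ Real.log C + N * Real.log (1 + Sv) + R * Sv := by
      have h1 := Real.log_le_log (by positivity) hcb
      rw [Real.log_mul hψz₀.ne' (pow_pos hq0 K).ne', Real.log_pow] at h1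
      rw [hMvdef, Real.log_mul (by positivity) (Real.exp_pos _).ne',
        Real.log_mul hC.ne' (by positivity), Real.log_exp, Real.log_pow] at h1
      linarith
    -- lower bound on K
    have hrr : ∀ j ∈ Finset.Icc 1 m, (Sv - ρ) * q⁻¹ ^ j - ρ = q^(m+1-j) * (T₀ + ρ) - ρ := by
      intro j hj
      rw [Finset.mem_Icc] at hj
      have hSvρ : Sv - ρ = q^(m+1) * (T₀ + ρ) := by rw [hSvdef]; ring
      rw [hSvρ]
      have : q^(m+1) * q⁻¹ ^ j = q^(m+1-j) := by
        rw [inv_pow, pow_sub₀ q hq0.ne' (by omega : j ≤ m+1)]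
        all_goals rw [div_eq_mul_inv]
      rw [mul_comm (q^(m+1)) (T₀+ρ), mul_assoc, this, mul_comm (T₀+ρ) _]
    have hrrT₀ : ∀ j ∈ Finset.Icc 1 m, T₀ ≤ (Sv - ρ) * q⁻¹ ^ j - ρ := by
      intro j hj
      rw [hrr j hj]
      have hjm : 1 ≤ m + 1 - j := by rw [Finset.mem_Icc] at hj; omega
      have hq' : q ≤ q^(m+1-j) := by
        calc q = q^1 := (pow_one q).symm
          _ ≤ q^(m+1-j) := pow_le_pow_right₀ hq1.le hjm
      have h8 : (1:ℝ) * (T₀ + ρ) ≤ q^(m+1-j) * (T₀ + ρ) :=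
        mul_le_mul_of_nonneg_right (by linarith) (by linarith)
      rw [one_mul] at h8
      linarith
    have hKlb : b * ((T₀ + ρ) * ((q^(m+1) - q)/(q-1)) - m * ρ) ≤ (K:ℝ) := by
      have h1 : (K:ℝ) = ∑ j ∈ Finset.Icc 1 m,
          ((Set.ncard {z : ℂ | ‖z‖ ≤ (Sv - ρ) * q⁻¹ ^ j - ρ ∧ ψ z = 0} : ℝ)) := by
        rw [hKdef]; push_cast; ring
      rw [h1]
      have h2 : ∀ j ∈ Finset.Icc 1 m, b * ((Sv - ρ) * q⁻¹ ^ j - ρ)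
          ≤ ((Set.ncard {z : ℂ | ‖z‖ ≤ (Sv - ρ) * q⁻¹ ^ j - ρ ∧ ψ z = 0} : ℝ)) := by
        intro j hj
        exact hnlb _ (hrrT₀ j hj)
      calc b * ((T₀ + ρ) * ((q^(m+1) - q)/(q-1)) - m * ρ)
          = ∑ j ∈ Finset.Icc 1 m, b * ((Sv - ρ) * q⁻¹ ^ j - ρ) := by
            rw [← Finset.mul_sum]
            congr 1
            rw [Finset.sum_congr rfl hrr]
            rw [Finset.sum_sub_distrib, ← Finset.sum_mul, geom_Icc hq1.ne' m]
            simp [Nat.card_Icc]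
            ring
        _ ≤ _ := Finset.sum_le_sum h2
    -- combine
    have hKlogq : b * ((T₀ + ρ) * ((q^(m+1) - q)/(q-1)) - m * ρ) * Real.log q
        ≤ (K:ℝ) * Real.log q := mul_le_mul_of_nonneg_right hKlb hlogq.le
    have hgeom_pos : 0 ≤ (T₀ + ρ) * ((q^(m+1) - q)/(q-1)) := by
      have h1 : q ≤ q^(m+1) := by
        calc q = q^1 := (pow_one q).symm
          _ ≤ q^(m+1) := pow_le_pow_right₀ hq1.le (by omega)
      have : 0 ≤ (q^(m+1) - q)/(q-1) := div_nonneg (by linarith) (by linarith)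
      positivity
    have hlogq_lb : 1 - q⁻¹ ≤ Real.log q := one_sub_inv_le_log hq0
    have hlogq_ub : Real.log q ≤ q - 1 := Real.log_le_sub_one_of_pos hq0
    -- lower bound for LHS of hKlogq
    have hstep1 : b * (T₀ + ρ) * (q^m - 1) - b * (m:ℝ) * ρ * (q-1)
        ≤ b * ((T₀ + ρ) * ((q^(m+1) - q)/(q-1)) - m * ρ) * Real.log q := by
      have e1 : b * ((T₀ + ρ) * ((q^(m+1) - q)/(q-1)) - m * ρ) * Real.log q
          = b * ((T₀ + ρ) * ((q^(m+1) - q)/(q-1))) * Real.log q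
            - b * (m:ℝ) * ρ * Real.log q := by ring
      rw [e1]
      have e2 : b * ((T₀ + ρ) * ((q^(m+1) - q)/(q-1))) * (1 - q⁻¹)
          ≤ b * ((T₀ + ρ) * ((q^(m+1) - q)/(q-1))) * Real.log q := by
        apply mul_le_mul_of_nonneg_left hlogq_lb
        positivity
      have e3 : b * (m:ℝ) * ρ * Real.log q ≤ b * (m:ℝ) * ρ * (q - 1) := by
        apply mul_le_mul_of_nonneg_left hlogq_ub
        positivity
      have e4 : b * ((T₀ + ρ) * ((q^(m+1) - q)/(q-1))) * (1 - q⁻¹)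
          = b * (T₀ + ρ) * (q^m - 1) := by
        have hq1' : q - 1 ≠ 0 := by linarith
        have : (q^(m+1) - q)/(q-1) * (1 - q⁻¹) = q^m - 1 := by
          rw [pow_succ]
          field_simp
        calc b * ((T₀ + ρ) * ((q^(m+1) - q)/(q-1))) * (1 - q⁻¹)
            = b * (T₀ + ρ) * ((q^(m+1) - q)/(q-1) * (1 - q⁻¹)) := by ring
          _ = b * (T₀ + ρ) * (q^m - 1) := by rw [this]
      linarith
    -- b (T₀+ρ) q^m = b' (Sv - ρ)
    have hid : b * (T₀ + ρ) * q^m = b' * (Sv - ρ) := by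
      have : Sv - ρ = q^(m+1) * (T₀ + ρ) := by rw [hSvdef]; ring
      rw [this, ← hbq, pow_succ]
      field_simp
    -- m bound : m * log q ≤ 2 sqrt Sv
    have hmbound : (m:ℝ) * Real.log q ≤ 2 * Real.sqrt Sv := by
      have h1 : Real.log (q^m) = (m:ℝ) * Real.log q := by rw [Real.log_pow]
      have h2 : Real.log (q^m) ≤ 2 * Real.sqrt (q^m) := log_le_two_sqrt (pow_pos hq0 m)
      have h3 : q^m ≤ Sv := by
        have h5 : (1:ℝ) ≤ q * (T₀ + ρ) := by
          have h := mul_le_mul hq1.le hT₀ρ1 zero_le_one hq0.le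
          linarith
        have h6 : q^m * 1 ≤ q^m * (q * (T₀ + ρ)) :=
          mul_le_mul_of_nonneg_left h5 (pow_pos hq0 m).le
        rw [mul_one] at h6
        have h7 : q^m * q * (T₀ + ρ) = q^m * (q * (T₀ + ρ)) := by ring
        rw [hSvdef, pow_succ]
        linarith
      have h4 : Real.sqrt (q^m) ≤ Real.sqrt Sv := Real.sqrt_le_sqrt h3
      linarith
    -- log(1+Sv) ≤ 2 + 2 sqrt Sv
    have hlog1Sv : Real.log (1 + Sv) ≤ 2 + 2 * Real.sqrt Sv := by
      have h1 : Real.log (1 + Sv) ≤ 2 * Real.sqrt (1 + Sv) := log_le_two_sqrt (by linarith)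
      have h2 : Real.sqrt (1 + Sv) ≤ 1 + Real.sqrt Sv := by
        rw [show (1:ℝ) + Sv = Sv + 1 by ring]
        calc Real.sqrt (Sv + 1) ≤ Real.sqrt ((1 + Real.sqrt Sv)^2) := by
              apply Real.sqrt_le_sqrt
              have e : (1 + Real.sqrt Sv)^2 = 1 + 2 * Real.sqrt Sv + Real.sqrt Sv^2 := by ring
              rw [e, Real.sq_sqrt hSv0.le]
              linarith [Real.sqrt_nonneg Sv]
          _ = 1 + Real.sqrt Sv := Real.sqrt_sq (by positivity)
      linarith
    -- put everything together
    have hfinal : b' * (Sv - ρ) - b * (T₀ + ρ) - b * ρ * (q-1) * (2 * Real.sqrt Sv / Real.log q)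
        ≤ Real.log C + N * Real.log (1 + Sv) + R * Sv - Real.log ‖ψ z₀‖ := by
      have h5 : b * (m:ℝ) * ρ * (q-1) ≤ b * ρ * (q-1) * (2 * Real.sqrt Sv / Real.log q) := by
        have hm : (m:ℝ) ≤ 2 * Real.sqrt Sv / Real.log q := by
          rw [le_div_iff₀ hlogq]
          linarith
        calc b * (m:ℝ) * ρ * (q-1) = b * ρ * (q-1) * (m:ℝ) := by ring
          _ ≤ b * ρ * (q-1) * (2 * Real.sqrt Sv / Real.log q) := by
              exact mul_le_mul_of_nonneg_left hm
                (mul_nonneg (mul_nonneg hb0.le hρ0) (by linarith))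
      have h6 : b * (T₀ + ρ) * (q^m - 1) = b' * (Sv - ρ) - b * (T₀ + ρ) := by
        rw [← hid]; ring
      have hchain : b * (T₀ + ρ) * (q^m - 1) - b * (m:ℝ) * ρ * (q-1) ≤ (K:ℝ) * Real.log q :=
        le_trans hstep1 hKlogq
      linarith [hchain, hlog, h5, h6]
    -- now bound N log and get the final form
    have hNlog : (N:ℝ) * Real.log (1 + Sv) ≤ 2*N + 2*N * Real.sqrt Sv := by
      have h := mul_le_mul_of_nonneg_left hlog1Sv (by positivity : (0:ℝ) ≤ (N:ℝ))
      have e : (N:ℝ) * (2 + 2 * Real.sqrt Sv) = 2*N + 2*N * Real.sqrt Sv := by ring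
      linarith
    have hAS : A * Sv = b' * Sv - R * Sv := by rw [← hb'RA]; ring
    rw [hAS]
    have expand : c * Real.sqrt Sv
        = b * ρ * (q-1) * (2 * Real.sqrt Sv / Real.log q) + 2*N*Real.sqrt Sv := by
      rw [hcdef]
      field_simp
    rw [hB₀def, expand]
    have e2 : b' * (Sv - ρ) = b' * Sv - b' * ρ := by ring
    linarith [hfinal, hNlog, e2]
  -- final contradiction
  set Q := max 1 (max ((2*c/A)^2) ((B₀+1)*(2/A))) with hQdef
  have hqm : ∀ᶠ m : ℕ in atTop, Q ≤ q^m := (tendsto_pow_atTop_atTop_of_one_lt hq1).eventually_ge_atTop Q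
  obtain ⟨m, hm⟩ := hqm.exists
  set Sv := q^(m+1) * (T₀ + ρ) + ρ with hSvdef
  have hT₀ρ1 : (1:ℝ) ≤ T₀ + ρ := by linarith [hT₀1, hρ0]
  have hSvQ : Q ≤ Sv := by
    have h1 : q^m ≤ q^(m+1) := pow_le_pow_right₀ hq1.le (by omega)
    have h2 : q^(m+1) ≤ q^(m+1) * (T₀ + ρ) := le_mul_of_one_le_right (by positivity) hT₀ρ1
    rw [hSvdef]; linarith
  have hQ1 : (1:ℝ) ≤ Q := le_max_left _ _
  clear_value Sv
  have hSv1 : (1:ℝ) ≤ Sv := le_trans hQ1 hSvQ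
  have hSv0 : (0:ℝ) < Sv := lt_of_lt_of_le one_pos hSv1
  have hmain' := hmain m
  rw [← hSvdef] at hmain'
  -- c * sqrt Sv ≤ A/2 * Sv
  have hsqrtQ : 2*c/A ≤ Real.sqrt Q := by
    have h1 : ((2*c/A)^2 : ℝ) ≤ Q := le_trans (le_max_left _ _) (le_max_right _ _)
    calc 2*c/A = Real.sqrt ((2*c/A)^2) := (Real.sqrt_sq (by positivity)).symm
      _ ≤ Real.sqrt Q := Real.sqrt_le_sqrt h1
  have hcs : c * Real.sqrt Sv ≤ A/2 * Sv := by
    have hQ0 : (0:ℝ) < Q := lt_of_lt_of_le one_pos hQ1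
    have hsQ0 : 0 < Real.sqrt Q := Real.sqrt_pos.mpr hQ0
    have h1 : Real.sqrt Sv ≤ Sv / Real.sqrt Q := by
      rw [le_div_iff₀ hsQ0]
      calc Real.sqrt Sv * Real.sqrt Q ≤ Real.sqrt Sv * Real.sqrt Sv := by
            apply mul_le_mul_of_nonneg_left (Real.sqrt_le_sqrt hSvQ) (Real.sqrt_nonneg _)
        _ = Sv := Real.mul_self_sqrt hSv0.le
    calc c * Real.sqrt Sv ≤ c * (Sv / Real.sqrt Q) :=
          mul_le_mul_of_nonneg_left h1 hc0
      _ = (c / Real.sqrt Q) * Sv := by ring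
      _ ≤ A/2 * Sv := by
          apply mul_le_mul_of_nonneg_right _ hSv0.le
          rw [div_le_iff₀ hsQ0]
          calc c = (2*c/A) * (A/2) := by field_simp
            _ ≤ Real.sqrt Q * (A/2) := mul_le_mul_of_nonneg_right hsqrtQ (by linarith)
            _ = A/2 * Real.sqrt Q := by ring
  have hB : B₀ ≤ A/2 * Sv - 1 := by
    have h1 : (B₀+1)*(2/A) ≤ Q := le_trans (le_max_right _ _) (le_max_right _ _)
    have h2 : (B₀+1)*(2/A) ≤ Sv := le_trans h1 hSvQ
    have h3 : B₀ + 1 ≤ A/2 * Sv := by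
      have hA2 : (0:ℝ) < A/2 := by linarith
      have h4 := mul_le_mul_of_nonneg_right h2 hA2.le
      have e : (B₀+1) * (2/A) * (A/2) = B₀ + 1 := by field_simp
      linarith
    linarith
  linarith [hmain', hcs, hB]
end
end
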